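/- arXiv:1304.1446 — 3 statements merged into one kernel-verified Lean document; each statement's English description precedes it below -/
import Mathlib

section
/- Let K ⊂ ℂ be compact, R : K → ℝ continuous, and suppose μ = μ_{K,R} is the weighted equilibrium measure with support S_R and Robin constant ρ, so that R(t) = ∫ log|t−ξ| dμ(ξ) + ρ for t ∈ S_R. Then for every ε > 0 there is a weak* neighbourhood G of μ in the probability measures on K such that whenever (z_1,...,z_n) ∈ K^n has normalized counting measure in G, the weighted polynomial satisfies sup_{t∈S_R} e^{-nR(t)} ∏_{j=1}^n |t - z_j| ≤ e^{-n(ρ - ε)}. -/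
open MeasureTheory Complex Set Filter
open scoped Topology ENNReal NNReal Real

noncomputable section

def logPlus (t : ℝ) : ℝ := max (Real.log t) 0

def IsSubharmonicFn (u : ℂ → ℝ) : Prop :=
  UpperSemicontinuous u ∧ ∀ (z : ℂ) (r : ℝ), 0 < r →
    u z ≤ (2 * Real.pi)⁻¹ * ∫ θ in (0:ℝ)..(2 * Real.pi), u (z + r * Complex.exp (θ * Complex.I))

def GreenAdmissible (Y : Set ℂ) (R : ℂ → ℝ) (u : ℂ → ℝ) : Prop :=
  IsSubharmonicFn u ∧ (∀ w ∈ Y, u w ≤ R w) ∧ ∃ C : ℝ, ∀ w, u w ≤ logPlus ‖w‖ + C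

def greenFn (Y : Set ℂ) (R : ℂ → ℝ) (z : ℂ) : ℝ :=
  sSup {x | ∃ u, GreenAdmissible Y R u ∧ u z = x}

def RegularSet (K : Set ℂ) : Prop := Continuous (greenFn K 0)

def energyE (R : ℂ → ℝ) (ν : Measure ℂ) : ℝ :=
  -∫ z, ∫ t, Real.log ‖z - t‖ ∂ν ∂ν + 2 * ∫ z, R z ∂ν

def IsEquilibrium (K : Set ℂ) (R : ℂ → ℝ) (μ : Measure ℂ) : Prop :=
  IsProbabilityMeasure μ ∧ μ Kᶜ = 0 ∧
  ∀ ν : Measure ℂ, IsProbabilityMeasure ν → ν Kᶜ = 0 → energyE R μ ≤ energyE R ν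

def msupport (μ : Measure ℂ) : Set ℂ := {z | ∀ U ∈ 𝓝 z, μ U ≠ 0}

def wPoly (R : ℂ → ℝ) (n : ℕ) (p : Polynomial ℂ) (z : ℂ) : ℝ :=
  Real.exp (-(n : ℝ) * R z) * ‖Polynomial.eval z p‖

def WeightedBM (K : Set ℂ) (R : ℂ → ℝ) (τ : Measure ℂ) : Prop :=
  ∀ ε > 0, ∃ C > 0, ∀ (n : ℕ) (p : Polynomial ℂ), p.natDegree ≤ n →
    ∀ z ∈ K, wPoly R n p z ≤ C * (1 + ε) ^ n * ∫ w in K, wPoly R n p w ∂τ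

def Avand (β : ℝ) (Q : ℂ → ℝ) (n : ℕ) (z : Fin n → ℂ) : ℝ :=
  (∏ p ∈ Finset.univ.filter (fun p : Fin n × Fin n => p.1 < p.2), ‖z p.1 - z p.2‖) ^ β *
    Real.exp (-2 * n * ∑ j, Q (z j))

def Zc (K : Set ℂ) (τ : Measure ℂ) (β : ℝ) (Q : ℂ → ℝ) (n : ℕ) : ℝ :=
  ∫ z in Set.univ.pi (fun _ : Fin n => K), Avand β Q n z ∂(Measure.pi fun _ => τ)

def ProbE (K : Set ℂ) (τ : Measure ℂ) (β : ℝ) (Q : ℂ → ℝ) (n : ℕ) (S : Set (Fin n → ℂ)) : ℝ :=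
  (∫ z in S ∩ Set.univ.pi (fun _ : Fin n => K), Avand β Q n z ∂(Measure.pi fun _ => τ)) / Zc K τ β Q n

def countPM {n : ℕ} (hn : n ≠ 0) (z : Fin n → ℂ) : ProbabilityMeasure ℂ :=
  ⟨(n : ℝ≥0∞)⁻¹ • ∑ j, Measure.dirac (z j), by
    constructor
    simp [Measure.smul_apply, Measure.coe_finset_sum, Finset.sum_apply, measure_univ, smul_eq_mul]
    exact ENNReal.inv_mul_cancel (by exact_mod_cast hn) (by simp)⟩

def Ebeta (β : ℝ) (Q : ℂ → ℝ) (ν : Measure ℂ) : ℝ :=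
  -(β/2) * ∫ x, ∫ y, Real.log ‖x - y‖ ∂ν ∂ν + 2 * ∫ x, Q x ∂ν

def IsCompactNbhdIn (K S N : Set ℂ) : Prop :=
  IsCompact N ∧ N ⊆ K ∧ ∃ U : Set ℂ, IsOpen U ∧ S ⊆ U ∧ U ∩ K ⊆ N


section AuxProof
open OmegaCompletePartialOrder

lemma chain_iSup_apply (m : ℕ → Measure ℂ) (hm : Monotone m) :
    ∀ A : Set ℂ, MeasurableSet A → (⨆ n, m n) A = ⨆ n, m n A := by
  have hadd : ∀ (f : ℕ → Set ℂ), (∀ i, MeasurableSet (f i)) → Pairwise (Function.onFun Disjoint f) →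
      (⨆ n, m n (⋃ i, f i)) = ∑' i, ⨆ n, m n (f i) := by
    intro f hfm hfd
    have h1 : ∀ n, m n (⋃ i, f i) = ∑' i, m n (f i) := fun n => measure_iUnion hfd hfm
    simp_rw [h1]
    have h2 : ∀ n, ∑' i, m n (f i) = ∫⁻ i, m n (f i) ∂(Measure.count) :=
      fun n => (lintegral_count _).symm
    have h3 : ∑' i, (⨆ n, m n (f i)) = ∫⁻ i, ⨆ n, m n (f i) ∂(Measure.count) :=
      (lintegral_count _).symm
    simp_rw [h2]
    rw [h3, lintegral_iSup (fun n => Measurable.of_discrete)]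
    intro a b hab i
    exact Measure.le_iff'.1 (hm hab) (f i)
  set ν : Measure ℂ := Measure.ofMeasurable (fun A _ => ⨆ n, m n A)
    (by simp) (fun f hfm hfd => hadd f hfm hfd) with hν
  have hνap : ∀ A : Set ℂ, MeasurableSet A → ν A = ⨆ n, m n A :=
    fun A hA => Measure.ofMeasurable_apply A hA
  have hub : ∀ k, m k ≤ ν := by
    intro k
    rw [Measure.le_iff]
    intro A hA
    rw [hνap A hA]
    exact le_iSup (fun n => m n A) k
  have h1 : (⨆ n, m n) ≤ ν := iSup_le hub
  have h2 : ν ≤ ⨆ n, m n := by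
    rw [Measure.le_iff]
    intro A hA
    rw [hνap A hA]
    exact iSup_le fun k => Measure.le_iff'.1 (le_iSup m k) A
  intro A hA
  rw [le_antisymm h1 h2, hνap A hA]

lemma chain_iSup_lintegral (m : ℕ → Measure ℂ) (hm : Monotone m) (g : ℂ → ℝ≥0∞) :
    ∫⁻ x, g x ∂(⨆ n, m n) = ⨆ n, ∫⁻ x, g x ∂(m n) := by
  have happly := chain_iSup_apply m hm
  have hsf : ∀ φ : SimpleFunc ℂ ℝ≥0∞, φ.lintegral (⨆ n, m n) = ⨆ n, φ.lintegral (m n) := by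
    intro φ
    simp only [SimpleFunc.lintegral]
    have h1 : ∀ x ∈ φ.range, x * (⨆ n, m n) (φ ⁻¹' {x}) = ⨆ n, x * m n (φ ⁻¹' {x}) := by
      intro x _
      rw [happly _ (φ.measurableSet_preimage {x}), ENNReal.mul_iSup]
    rw [Finset.sum_congr rfl h1]
    apply ENNReal.finsetSum_iSup_of_monotone
    intro x a b hab
    exact mul_le_mul_right (Measure.le_iff'.1 (hm hab) _) x
  rw [lintegral_def]
  simp_rw [hsf]
  apply le_antisymm
  · refine iSup_le fun φ => iSup_le fun hφ => iSup_le fun n => ?_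
    refine le_iSup_of_le n ?_
    rw [lintegral_def]
    exact le_iSup₂ (f := fun (φ : SimpleFunc ℂ ℝ≥0∞) (_ : ⇑φ ≤ fun x => g x) =>
      φ.lintegral (m n)) φ hφ
  · refine iSup_le fun n => ?_
    rw [lintegral_def]
    refine iSup_le fun φ => iSup_le fun hφ => ?_
    exact le_iSup₂_of_le φ hφ (le_iSup (fun k => φ.lintegral (m k)) n)

lemma isOpen_lintegral_gt (g : BoundedContinuousFunction ℂ ℝ) (a : ℝ≥0∞) :
    IsOpen {ν : ProbabilityMeasure ℂ | a < ∫⁻ x, ENNReal.ofReal (g x) ∂(ν : Measure ℂ)} := by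
  have hc : Continuous fun ν : ProbabilityMeasure ℂ =>
      ∫⁻ x, ((g.nnrealPart x : ℝ≥0) : ℝ≥0∞) ∂(ν : Measure ℂ) := by
    rw [continuous_iff_continuousAt]
    intro ν
    exact (ProbabilityMeasure.tendsto_iff_forall_lintegral_tendsto.1 tendsto_id) g.nnrealPart
  exact isOpen_lt continuous_const hc


lemma pot_bound (μ : Measure ℂ) [IsProbabilityMeasure μ] (K : Set ℂ) (hK0 : μ Kᶜ = 0)
    (M : ℝ) (hM1 : 1 ≤ M) (hKM : ∀ x ∈ K, ‖x‖ ≤ M) (t₀ : ℂ) (ht₀ : ‖t₀‖ ≤ M)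
    (ε' : ℝ) (hε' : 0 < ε') :
    ∃ δ : ℝ, 0 < δ ∧ δ < 1/2 ∧
      ∫ ξ, Real.log (δ + ‖t₀ - ξ‖) ∂μ
        ≤ (∫ ξ, Real.log (‖t₀ - ξ‖) ∂μ) + ε' := by
  set L : ℂ → ℝ := fun ξ => Real.log (‖t₀ - ξ‖) with hLdef
  have hLmeas : Measurable L :=
    Real.measurable_log.comp ((continuous_norm.comp
      (continuous_const.sub continuous_id)).measurable)
  have haeK : ∀ᵐ ξ ∂μ, ξ ∈ K := by
    rw [ae_iff]
    exact hK0
  have habs : ∀ ξ ∈ K, ‖t₀ - ξ‖ ≤ 2 * M := by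
    intro ξ hξ
    calc ‖t₀ - ξ‖ ≤ ‖t₀‖ + ‖ξ‖ := by
          simpa using norm_sub_le t₀ ξ
      _ ≤ 2 * M := by have := hKM ξ hξ; linarith
  have hupper : ∀ ξ ∈ K, L ξ ≤ Real.log (2 * M) := by
    intro ξ hξ
    rcases eq_or_lt_of_le (norm_nonneg (t₀ - ξ)) with h | h
    · simp only [hLdef, ← h, Real.log_zero]
      exact Real.log_nonneg (by linarith)
    · exact Real.log_le_log h (habs ξ hξ)
  have haebd : ∀ᵐ ξ ∂μ, L ξ ≤ Real.log (2 * M) := by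
    filter_upwards [haeK] with ξ hξ using hupper ξ hξ
  -- integrability on complements of small balls
  have hIntOn : ∀ c : ℝ, 0 < c → IntegrableOn L (Metric.closedBall t₀ c)ᶜ μ := by
    intro c hc
    refine Integrable.mono' (integrable_const (max (Real.log (2 * M)) (-Real.log c)))
      hLmeas.aestronglyMeasurable ?_
    filter_upwards [ae_restrict_mem measurableSet_closedBall.compl, ae_restrict_of_ae haeK]
      with ξ h1 h2
    have hcr : c < ‖t₀ - ξ‖ := by
      have := h1
      simp only [mem_compl_iff, Metric.mem_closedBall, not_le] at this
      calc c < dist ξ t₀ := this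
        _ = ‖t₀ - ξ‖ := by rw [dist_comm, Complex.dist_eq]
    rw [Real.norm_eq_abs, abs_le]
    constructor
    · have : Real.log c ≤ L ξ := Real.log_le_log hc hcr.le
      have h' : -(max (Real.log (2*M)) (-Real.log c)) ≤ Real.log c := by
        have := le_max_right (Real.log (2*M)) (-Real.log c)
        linarith
      linarith
    · exact (hupper ξ h2).trans (le_max_left _ _)
  -- Step A: a small radius past which the outer integral nearly bounds the full one
  have stepA : ∃ c : ℝ, 0 < c ∧ c ≤ 1/4 ∧
      ∫ ξ in (Metric.closedBall t₀ c)ᶜ, L ξ ∂μ ≤ (∫ ξ, L ξ ∂μ) + ε'/4 := by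
    set s : ℕ → Set ℂ := fun k => (Metric.closedBall t₀ (1/(k+4 : ℝ)))ᶜ with hs
    have hsm : ∀ k, MeasurableSet (s k) := fun k => measurableSet_closedBall.compl
    have hrad : ∀ k : ℕ, (0:ℝ) < 1/(k+4:ℝ) := by intro k; positivity
    have hrad4 : ∀ k : ℕ, 1/(k+4:ℝ) ≤ 1/4 := by
      intro k
      apply one_div_le_one_div_of_le (by norm_num)
      have : (0:ℝ) ≤ (k:ℝ) := Nat.cast_nonneg k
      linarith
    have hmono : Monotone s := by
      intro k l hkl
      apply compl_subset_compl.2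
      apply Metric.closedBall_subset_closedBall
      apply one_div_le_one_div_of_le (by positivity)
      have : (k:ℝ) ≤ (l:ℝ) := Nat.cast_le.2 hkl
      linarith
    have hUnion : ⋃ k, s k = {t₀}ᶜ := by
      ext ξ
      simp only [mem_iUnion, hs, mem_compl_iff, Metric.mem_closedBall, not_le,
        mem_singleton_iff]
      constructor
      · rintro ⟨k, hk⟩
        intro h
        subst h
        simp only [dist_self] at hk
        exact absurd hk (not_lt.2 (hrad k).le)
      · intro h
        have hd : 0 < dist ξ t₀ := dist_pos.2 h
        obtain ⟨n, hn⟩ := exists_nat_one_div_lt hd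
        refine ⟨n + 3, ?_⟩
        push_cast
        have h17 : 1/((n:ℝ)+3+4) ≤ 1/((n:ℝ)+1) :=
          one_div_le_one_div_of_le (by positivity) (by linarith)
        linarith
    by_cases hInt : Integrable L μ
    · have htd := tendsto_setIntegral_of_monotone hsm hmono
        (by rw [hUnion]; exact hInt.integrableOn)
      have hlim : ∫ ξ in ⋃ k, s k, L ξ ∂μ = ∫ ξ, L ξ ∂μ := by
        rw [hUnion]
        have h0 : ∫ ξ in {t₀}, L ξ ∂μ = 0 := by
          have hz : ∀ᵐ ξ ∂(μ.restrict {t₀}), L ξ = 0 := by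
            filter_upwards [ae_restrict_mem (measurableSet_singleton t₀)] with ξ hξ
            rw [mem_singleton_iff] at hξ
            subst hξ
            simp [hLdef]
          rw [integral_congr_ae hz, integral_zero]
        have := integral_add_compl (measurableSet_singleton t₀) hInt
        rw [h0] at this
        linarith [this]
      rw [hlim] at htd
      have hev := htd.eventually_lt_const
        (show (∫ ξ, L ξ ∂μ) < (∫ ξ, L ξ ∂μ) + ε'/4 by linarith)
      obtain ⟨k, hk⟩ := hev.exists
      exact ⟨1/(k+4:ℝ), hrad k, hrad4 k, hk.le⟩
    · have hI0 : ∫ ξ, L ξ ∂μ = 0 := integral_undef hInt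
      set g : ℂ → ℝ≥0∞ := fun ξ => ENNReal.ofReal (-(L ξ)) with hg
      have hgmeas : Measurable g := (hLmeas.neg).ennreal_ofReal
      have hP : ∫⁻ ξ, ENNReal.ofReal (L ξ) ∂μ < ∞ := by
        calc ∫⁻ ξ, ENNReal.ofReal (L ξ) ∂μ
            ≤ ∫⁻ _, ENNReal.ofReal (Real.log (2*M)) ∂μ := by
              apply lintegral_mono_ae
              filter_upwards [haebd] with ξ hξ
              exact ENNReal.ofReal_le_ofReal hξ
          _ = ENNReal.ofReal (Real.log (2*M)) * μ univ := lintegral_const _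
          _ < ∞ := ENNReal.mul_lt_top ENNReal.ofReal_lt_top (measure_lt_top μ univ)
      have hgtop : ∫⁻ ξ, g ξ ∂μ = ∞ := by
        by_contra hne
        apply hInt
        refine ⟨hLmeas.aestronglyMeasurable, ?_⟩
        rw [hasFiniteIntegral_iff_norm]
        calc ∫⁻ ξ, ENNReal.ofReal ‖L ξ‖ ∂μ
            ≤ ∫⁻ ξ, (ENNReal.ofReal (L ξ) + g ξ) ∂μ := by
              apply lintegral_mono
              intro ξ
              simp only [Real.norm_eq_abs]
              rcases le_total 0 (L ξ) with h | h
              · rw [_root_.abs_of_nonneg h]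
                exact le_add_of_le_of_nonneg (le_refl _) (zero_le)
              · rw [_root_.abs_of_nonpos h]
                exact le_add_of_nonneg_of_le (zero_le) (le_refl _)
          _ = (∫⁻ ξ, ENNReal.ofReal (L ξ) ∂μ) + ∫⁻ ξ, g ξ ∂μ :=
              lintegral_add_left hLmeas.ennreal_ofReal _
          _ < ∞ := ENNReal.add_lt_top.2 ⟨hP, lt_top_iff_ne_top.2 hne⟩
      have hind : ∀ ξ, (⨆ k, (s k).indicator g ξ) = g ξ := by
        intro ξ
        by_cases hξ : ξ = t₀
        · have hg0 : g ξ = 0 := by simp [hg, hLdef, hξ]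
          have h1 : ∀ k, ξ ∉ s k := by
            intro k
            simp only [hs, mem_compl_iff, not_not, Metric.mem_closedBall, hξ, dist_self]
            exact (hrad k).le
          rw [hg0]
          refine le_antisymm (iSup_le fun k => ?_) (zero_le)
          rw [Set.indicator_of_notMem (h1 k)]
        · have hmem : ∃ k, ξ ∈ s k := by
            have : ξ ∈ ⋃ k, s k := by rw [hUnion]; exact hξ
            exact mem_iUnion.1 this
          obtain ⟨k, hk⟩ := hmem
          apply le_antisymm
          · exact iSup_le fun j => Set.indicator_le_self _ _ ξ
          · exact le_iSup_of_le k (by rw [Set.indicator_of_mem hk])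
      have hmc : (⨆ k, ∫⁻ ξ in s k, g ξ ∂μ) = ∞ := by
        have h1 : ∀ k, ∫⁻ ξ in s k, g ξ ∂μ = ∫⁻ ξ, (s k).indicator g ξ ∂μ := by
          intro k
          rw [lintegral_indicator (hsm k)]
        calc (⨆ k, ∫⁻ ξ in s k, g ξ ∂μ) = ⨆ k, ∫⁻ ξ, (s k).indicator g ξ ∂μ := by
              simp_rw [h1]
          _ = ∫⁻ ξ, ⨆ k, (s k).indicator g ξ ∂μ := by
              rw [lintegral_iSup (fun k => hgmeas.indicator (hsm k))]
              intro i j hij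
              exact fun ξ =>
                Set.indicator_le_indicator_of_subset (hmono hij) (fun _ => zero_le) ξ
          _ = ∫⁻ ξ, g ξ ∂μ := by simp_rw [hind]
          _ = ∞ := hgtop
      set P : ℝ≥0∞ := ∫⁻ ξ, ENNReal.ofReal (L ξ) ∂μ with hPdef
      have hPfin : P ≠ ∞ := hP.ne
      have hex : ∃ k, P + 1 ≤ ∫⁻ ξ in s k, g ξ ∂μ := by
        by_contra hcon
        push_neg at hcon
        have hle : (⨆ k, ∫⁻ ξ in s k, g ξ ∂μ) ≤ P + 1 := iSup_le fun k => (hcon k).le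
        rw [hmc] at hle
        have : P + 1 < ∞ := ENNReal.add_lt_top.2 ⟨hP, by norm_num⟩
        exact absurd (top_le_iff.1 hle) this.ne
      obtain ⟨k, hk⟩ := hex
      refine ⟨1/(k+4:ℝ), hrad k, hrad4 k, ?_⟩
      have hio : IntegrableOn L (s k) μ := hIntOn _ (hrad k)
      have heq := integral_eq_lintegral_pos_part_sub_lintegral_neg_part hio
      have hA : ∫⁻ a, ENNReal.ofReal (L a) ∂(μ.restrict (s k)) ≤ P := by
        rw [hPdef]
        exact setLIntegral_le_lintegral _ _
      have hgfin : ∫⁻ a, ENNReal.ofReal (-(L a)) ∂(μ.restrict (s k)) ≠ ∞ := by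
        have hfi := hio.2
        rw [hasFiniteIntegral_iff_norm] at hfi
        refine ne_of_lt (lt_of_le_of_lt ?_ hfi)
        apply lintegral_mono
        intro a
        exact ENNReal.ofReal_le_ofReal (by rw [Real.norm_eq_abs]; exact neg_le_abs _)
      have hBge : (P.toReal + 1) ≤ (∫⁻ a, ENNReal.ofReal (-(L a)) ∂(μ.restrict (s k))).toReal := by
        have h2 : P + 1 ≤ ∫⁻ a, ENNReal.ofReal (-(L a)) ∂(μ.restrict (s k)) := hk
        calc P.toReal + 1 = (P + 1).toReal := by
              rw [ENNReal.toReal_add hPfin (by norm_num)]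
              norm_num
          _ ≤ _ := ENNReal.toReal_mono hgfin h2
      have hAle : (∫⁻ a, ENNReal.ofReal (L a) ∂(μ.restrict (s k))).toReal ≤ P.toReal :=
        ENNReal.toReal_mono hPfin hA
      rw [hI0]
      have hfin : ∫ ξ in s k, L ξ ∂μ ≤ -1 := by
        rw [heq]
        linarith
      linarith
  obtain ⟨c, hc0, hc14, hA⟩ := stepA
  -- main estimate
  set δ : ℝ := c * min (ε'/4) 1 with hδdef
  have hmin0 : 0 < min (ε'/4) 1 := lt_min (by linarith) one_pos
  have hδ0 : 0 < δ := mul_pos hc0 hmin0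
  have hδc : δ ≤ c := by
    have := min_le_right (ε'/4) 1
    nlinarith
  have hδe : δ ≤ c * (ε'/4) := by
    have := min_le_left (ε'/4) 1
    nlinarith
  have hδ12 : δ < 1/2 := lt_of_le_of_lt (hδc.trans hc14) (by norm_num)
  set f : ℂ → ℝ := fun ξ => Real.log (δ + ‖t₀ - ξ‖) with hfdef
  have hfcont : Continuous f := by
    apply Continuous.log
    · exact continuous_const.add (continuous_norm.comp (continuous_const.sub continuous_id))
    · intro x
      have := norm_nonneg (t₀ - x)
      positivity
  have hfInt : Integrable f μ := by
    refine Integrable.mono' (integrable_const (max (Real.log (δ + 2*M)) (-Real.log δ)))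
      hfcont.aestronglyMeasurable ?_
    filter_upwards [haeK] with ξ hξ
    rw [Real.norm_eq_abs, abs_le]
    have h1 : δ ≤ δ + ‖t₀ - ξ‖ := by
      have := norm_nonneg (t₀ - ξ); linarith
    have h2 : δ + ‖t₀ - ξ‖ ≤ δ + 2*M := by
      have := habs ξ hξ; linarith
    constructor
    · have : Real.log δ ≤ f ξ := Real.log_le_log hδ0 h1
      have h' := le_max_right (Real.log (δ + 2*M)) (-Real.log δ)
      linarith
    · exact (Real.log_le_log (by linarith) h2).trans (le_max_left _ _)
  have hsplit := integral_add_compl (measurableSet_closedBall (x := t₀) (ε := c)) hfInt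
  have h1 : ∫ ξ in Metric.closedBall t₀ c, f ξ ∂μ ≤ 0 := by
    apply setIntegral_nonpos measurableSet_closedBall
    intro ξ hξ
    apply Real.log_nonpos
    · have := norm_nonneg (t₀ - ξ); linarith
    · rw [Metric.mem_closedBall] at hξ
      have : ‖t₀ - ξ‖ ≤ c := by
        rw [← Complex.dist_eq, dist_comm]; exact hξ
      linarith
  have h2 : ∫ ξ in (Metric.closedBall t₀ c)ᶜ, f ξ ∂μ
      ≤ ∫ ξ in (Metric.closedBall t₀ c)ᶜ, (L ξ + ε'/4) ∂μ := by
    apply setIntegral_mono_on hfInt.integrableOn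
      ((hIntOn c hc0).add (integrableOn_const (measure_ne_top _ _)))
      measurableSet_closedBall.compl
    intro ξ hξ
    have hcr : c < ‖t₀ - ξ‖ := by
      simp only [mem_compl_iff, Metric.mem_closedBall, not_le] at hξ
      calc c < dist ξ t₀ := hξ
        _ = ‖t₀ - ξ‖ := by rw [dist_comm, Complex.dist_eq]
    set r := ‖t₀ - ξ‖ with hr
    have hr0 : 0 < r := hc0.trans hcr
    have key : δ + r ≤ r * (1 + ε'/4) := by
      have : δ ≤ r * (ε'/4) := hδe.trans (by nlinarith)
      nlinarith
    calc f ξ = Real.log (δ + r) := rfl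
      _ ≤ Real.log (r * (1 + ε'/4)) := Real.log_le_log (by linarith) key
      _ = Real.log r + Real.log (1 + ε'/4) := Real.log_mul (by linarith) (by linarith)
      _ ≤ L ξ + ε'/4 := by
          have := Real.log_le_sub_one_of_pos (show (0:ℝ) < 1 + ε'/4 by linarith)
          have h4 : Real.log (1 + ε'/4) ≤ ε'/4 := by linarith
          simp only [hLdef]
          linarith
  have h3 : ∫ ξ in (Metric.closedBall t₀ c)ᶜ, (L ξ + ε'/4) ∂μ
      ≤ (∫ ξ, L ξ ∂μ) + ε'/4 + ε'/4 := by
    rw [integral_add (hIntOn c hc0) (integrable_const _)]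
    have hμc : (μ (Metric.closedBall t₀ c)ᶜ).toReal ≤ 1 := by
      have := prob_le_one (μ := μ) (s := (Metric.closedBall t₀ c)ᶜ)
      calc (μ (Metric.closedBall t₀ c)ᶜ).toReal ≤ (1 : ℝ≥0∞).toReal :=
            ENNReal.toReal_mono (by norm_num) this
        _ = 1 := by norm_num
    rw [setIntegral_const, measureReal_def]
    have : (μ (Metric.closedBall t₀ c)ᶜ).toReal • (ε'/4) ≤ ε'/4 := by
      rw [smul_eq_mul]
      nlinarith [ENNReal.toReal_nonneg (a := μ (Metric.closedBall t₀ c)ᶜ)]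
    linarith
  refine ⟨δ, hδ0, hδ12, ?_⟩
  have hfinal : ∫ ξ, f ξ ∂μ ≤ (∫ ξ, L ξ ∂μ) + ε' := by
    rw [← hsplit]
    linarith
  exact hfinal

end AuxProof

theorem stmt2 (K : Set ℂ) (hKc : IsCompact K) (hKreg : RegularSet K)
    (R : ℂ → ℝ) (hR : ContinuousOn R K)
    (μ : Measure ℂ) (hμ : IsEquilibrium K R μ) (ρ : ℝ)
    (hρ : ∀ t ∈ msupport μ, R t = (∫ ξ, Real.log ‖t - ξ‖ ∂μ) + ρ)
    (ε : ℝ) (hε : 0 < ε) :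
    ∃ G ∈ @nhds (ProbabilityMeasure ℂ) _ ⟨μ, hμ.1⟩, ∀ (n : ℕ) (hn : n ≠ 0) (z : Fin n → ℂ),
      (∀ j, z j ∈ K) → countPM hn z ∈ G →
      ∀ t ∈ msupport μ,
        Real.exp (-(n : ℝ) * R t) * ∏ j, ‖t - z j‖
          ≤ Real.exp (-(n : ℝ) * (ρ - ε)) := by
  
  haveI hPM : IsProbabilityMeasure μ := hμ.1
  have hK0 : μ Kᶜ = 0 := hμ.2.1
  have haeK : ∀ᵐ ξ ∂μ, ξ ∈ K := by rw [ae_iff]; exact hK0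
  obtain ⟨M₀, hM₀⟩ := (Metric.isBounded_iff_subset_closedBall (0:ℂ)).1 hKc.isBounded
  set M : ℝ := max M₀ 1 with hMdef
  have hM1 : 1 ≤ M := le_max_right _ _
  have hKM : ∀ x ∈ K, ‖x‖ ≤ M := by
    intro x hx
    have := hM₀ hx
    rw [Metric.mem_closedBall, Complex.dist_eq, sub_zero] at this
    exact this.trans (le_max_left _ _)
  have habs2 : ∀ t₀ ∈ K, ∀ ξ ∈ K, ‖t₀ - ξ‖ ≤ 2 * M := by
    intro t₀ ht₀ ξ hξ
    calc ‖t₀ - ξ‖ ≤ ‖t₀‖ + ‖ξ‖ := by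
          simpa using norm_sub_le t₀ ξ
      _ ≤ 2 * M := by have := hKM ξ hξ; have := hKM t₀ ht₀; linarith
  have hSK : msupport μ ⊆ K := by
    intro x hx
    by_contra hxK
    exact hx Kᶜ (hKc.isClosed.isOpen_compl.mem_nhds hxK) hK0
  have hSclosed : IsClosed (msupport μ) := by
    rw [← isOpen_compl_iff, isOpen_iff_mem_nhds]
    intro x hx
    rw [mem_compl_iff, msupport, mem_setOf_eq] at hx
    push_neg at hx
    obtain ⟨U, hU, hU0⟩ := hx
    obtain ⟨V, hVU, hVopen, hxV⟩ := mem_nhds_iff.1 hU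
    refine Filter.mem_of_superset (hVopen.mem_nhds hxV) ?_
    intro y hy
    rw [mem_compl_iff, msupport, mem_setOf_eq]
    push_neg
    exact ⟨V, hVopen.mem_nhds hy, measure_mono_null hVU hU0⟩
  have hScomp : IsCompact (msupport μ) := hKc.of_isClosed_subset hSclosed hSK
  -- per-point construction
  have key : ∀ t₀ ∈ msupport μ, ∃ rr > 0, ∃ h : ℂ → ℝ, ∃ C : ℝ,
      Continuous h ∧ (∃ D, ∀ x, D ≤ h x) ∧ (∀ x, h x ≤ C - 1) ∧
      (ENNReal.ofReal (C - ((R t₀ - ρ) + ε/2)) <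
        ∫⁻ x, ENNReal.ofReal (C - h x) ∂μ) ∧
      (∀ t ∈ K, dist t t₀ < rr → (R t₀ - ρ) + ε/2 ≤ (R t - ρ) + 5*ε/6) ∧
      (∀ t : ℂ, dist t t₀ < rr → ∀ w ∈ K, ‖t - w‖ ≠ 0 →
          Real.log (‖t - w‖) ≤ h w) := by
    intro t₀ ht₀
    have ht₀K : t₀ ∈ K := hSK ht₀
    obtain ⟨δ, hδ0, hδ12, hδint⟩ :=
      pot_bound μ K hK0 M hM1 hKM t₀ (hKM _ ht₀K) (ε/3) (by linarith)
    set hfun : ℂ → ℝ := fun ξ => Real.log (δ + min (dist t₀ ξ) (2*M)) with hfdef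
    set C : ℝ := Real.log (δ + 2*M) + 1 with hCdef
    have hcont : Continuous hfun := by
      apply Continuous.log
      · exact continuous_const.add ((continuous_const.dist continuous_id).min continuous_const)
      · intro x
        have h0 : 0 ≤ min (dist t₀ x) (2*M) := le_min dist_nonneg (by linarith)
        exact ne_of_gt (by linarith)
    have hlb : ∀ x, Real.log δ ≤ hfun x := by
      intro x
      have h0 : 0 ≤ min (dist t₀ x) (2*M) := le_min dist_nonneg (by linarith)
      exact Real.log_le_log hδ0 (by linarith)
    have hub : ∀ x, hfun x ≤ C - 1 := by
      intro x
      have h1 : min (dist t₀ x) (2*M) ≤ 2*M := min_le_right _ _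
      have h0 : 0 ≤ min (dist t₀ x) (2*M) := le_min dist_nonneg (by linarith)
      have : hfun x ≤ Real.log (δ + 2*M) := Real.log_le_log (by linarith) (by linarith)
      rw [hCdef]; linarith
    have hInth : Integrable hfun μ := by
      refine Integrable.mono' (integrable_const (max (C - 1) (-Real.log δ)))
        hcont.aestronglyMeasurable ?_
      filter_upwards with x
      rw [Real.norm_eq_abs, abs_le]
      constructor
      · have := hlb x
        have h' := le_max_right (C - 1) (-Real.log δ)
        linarith
      · exact (hub x).trans (le_max_left _ _)
    have hint_eq : ∫ x, hfun x ∂μ = ∫ ξ, Real.log (δ + ‖t₀ - ξ‖) ∂μ := by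
      apply integral_congr_ae
      filter_upwards [haeK] with ξ hξ
      have hd : ‖t₀ - ξ‖ ≤ 2*M := habs2 t₀ ht₀K ξ hξ
      simp only [hfdef, Complex.dist_eq, min_eq_left hd]
    have hI : (∫ ξ, Real.log (‖t₀ - ξ‖) ∂μ) = R t₀ - ρ := by
      have := hρ t₀ ht₀; linarith
    have hμint : ∫ x, hfun x ∂μ < (R t₀ - ρ) + ε/2 := by
      rw [hint_eq]
      calc ∫ ξ, Real.log (δ + ‖t₀ - ξ‖) ∂μ
          ≤ (R t₀ - ρ) + ε/3 := by rw [← hI]; exact hδint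
        _ < (R t₀ - ρ) + ε/2 := by linarith
    -- the lintegral condition
    have hμbound : ∫ x, hfun x ∂μ ≤ C - 1 := by
      calc ∫ x, hfun x ∂μ ≤ ∫ _, (C - 1) ∂μ := integral_mono hInth (integrable_const _)
            (fun x => hub x)
        _ = C - 1 := by simp [measure_univ]
    have hlint : ENNReal.ofReal (C - ((R t₀ - ρ) + ε/2)) <
        ∫⁻ x, ENNReal.ofReal (C - hfun x) ∂μ := by
      have hICint : Integrable (fun x => C - hfun x) μ := (integrable_const C).sub hInth
      have hnn : 0 ≤ᵐ[μ] fun x => C - hfun x := by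
        filter_upwards with x
        have := hub x
        simp only [Pi.zero_apply]
        linarith
      rw [← ofReal_integral_eq_lintegral_ofReal hICint hnn]
      rw [integral_sub (integrable_const C) hInth, integral_const]
      simp only [probReal_univ, one_smul]
      apply (ENNReal.ofReal_lt_ofReal_iff ?_).2
      · linarith
      · linarith
    -- continuity radius
    have hcw : ContinuousWithinAt R K t₀ := hR t₀ ht₀K
    rw [Metric.continuousWithinAt_iff] at hcw
    obtain ⟨r₁, hr₁0, hr₁⟩ := hcw (ε/3) (by linarith)
    refine ⟨min δ r₁, lt_min hδ0 hr₁0, hfun, C, hcont, ⟨Real.log δ, hlb⟩, hub, hlint, ?_, ?_⟩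
    · intro t htK hdist
      have hh := hr₁ htK (lt_of_lt_of_le hdist (min_le_right _ _))
      rw [Real.dist_eq, abs_lt] at hh
      linarith
    · intro t hdist w hw habs0
      have h1 : ‖t - w‖ ≤ dist t t₀ + dist t₀ w := by
        rw [← Complex.dist_eq]; exact dist_triangle t t₀ w
      have h2 : dist t₀ w ≤ 2*M := by rw [Complex.dist_eq]; exact habs2 t₀ ht₀K w hw
      have h3 : ‖t - w‖ < δ + min (dist t₀ w) (2*M) := by
        rw [min_eq_left h2]
        have := lt_of_lt_of_le hdist (min_le_left δ r₁)
        linarith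
      have hpos : 0 < ‖t - w‖ := (norm_nonneg _).lt_of_ne (Ne.symm habs0)
      exact Real.log_le_log hpos h3.le
  choose rr hrr0 hf hC hmeas hlow hub hlint hRcont hlogle using key
  obtain ⟨T, hT⟩ := hScomp.elim_nhds_subcover' (fun x hx => Metric.ball (x:ℂ) (rr x hx))
    (fun x hx => Metric.ball_mem_nhds _ (hrr0 x hx))
  refine ⟨⋂ i ∈ T, {ν : ProbabilityMeasure ℂ |
      ENNReal.ofReal (hC i i.2 - ((R i - ρ) + ε/2)) <
        ∫⁻ x, ENNReal.ofReal (hC i i.2 - hf i i.2 x) ∂(ν : Measure ℂ)}, ?_, ?_⟩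
  · apply (Filter.biInter_finset_mem T).2
    intro i hi
    obtain ⟨D, hD⟩ := hlow i i.2
    have hU : IsOpen {ν : ProbabilityMeasure ℂ | ENNReal.ofReal (hC i i.2 - ((R i - ρ) + ε/2)) <
        ∫⁻ x, ENNReal.ofReal (hC i i.2 - hf i i.2 x) ∂(ν : Measure ℂ)} :=
      isOpen_lintegral_gt (BoundedContinuousFunction.ofNormedAddCommGroup
        (fun x => hC i i.2 - hf i i.2 x) (continuous_const.sub (hmeas i i.2)) (hC i i.2 - D)
        (fun x => by
          have h1 := hub i i.2 x
          have h2 := hD x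
          rw [Real.norm_eq_abs, abs_le]
          constructor <;> linarith)) _
    exact hU.mem_nhds (hlint i i.2)
  · intro n hn z hzK hzG t ht
    have hn' : 0 < (n:ℝ) := by exact_mod_cast Nat.pos_of_ne_zero hn
    obtain ⟨i, hiT, hti⟩ := Set.mem_iUnion₂.1 (hT ht)
    rw [Metric.mem_ball] at hti
    have hmem := Set.mem_iInter₂.1 hzG i hiT
    rw [Set.mem_setOf_eq] at hmem
    set C := hC i i.2 with hCd
    set h := hf i i.2 with hhd
    set β := (R (i:ℂ) - ρ) + ε/2 with hβd
    -- compute the lintegral over the counting measure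
    have hcnt : ∫⁻ x, ENNReal.ofReal (C - h x) ∂(countPM hn z : Measure ℂ)
        = (n:ℝ≥0∞)⁻¹ * ∑ j, ENNReal.ofReal (C - h (z j)) := by
      show ∫⁻ x, _ ∂((n : ℝ≥0∞)⁻¹ • ∑ j, Measure.dirac (z j)) = _
      rw [lintegral_smul_measure, lintegral_finset_sum_measure]
      congr 1
      refine Finset.sum_congr rfl fun j _ => ?_
      exact lintegral_dirac' _ (Measurable.ennreal_ofReal
        (measurable_const.sub (hmeas i i.2).measurable))
    rw [hcnt] at hmem
    -- extract the real inequality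
    have hSnn : ∀ j : Fin n, 0 ≤ C - h (z j) := by
      intro j
      have := hub i i.2 (z j)
      linarith
    have hsum_eq : ∑ j, ENNReal.ofReal (C - h (z j))
        = ENNReal.ofReal (∑ j, (C - h (z j))) := by
      rw [ENNReal.ofReal_sum_of_nonneg (fun j _ => hSnn j)]
    rw [hsum_eq] at hmem
    have hbne : (n:ℝ≥0∞)⁻¹ * ENNReal.ofReal (∑ j, (C - h (z j))) ≠ ∞ := by
      apply ENNReal.mul_ne_top
      · exact ENNReal.inv_ne_top.2 (by exact_mod_cast hn)
      · exact ENNReal.ofReal_ne_top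
    have hreal : C - β < (n:ℝ)⁻¹ * ∑ j, (C - h (z j)) := by
      have := (ENNReal.toReal_lt_toReal ENNReal.ofReal_ne_top hbne).2 hmem
      rw [ENNReal.toReal_mul, ENNReal.toReal_inv, ENNReal.toReal_natCast,
        ENNReal.toReal_ofReal (Finset.sum_nonneg fun j _ => hSnn j)] at this
      calc C - β ≤ max (C - β) 0 := le_max_left _ _
        _ = (ENNReal.ofReal (C - β)).toReal := by rw [ENNReal.toReal_ofReal']
        _ < _ := this
    have hsum_h : ∑ j, h (z j) < (n:ℝ) * β := by
      have hS : ∑ j, (C - h (z j)) = (n:ℝ) * C - ∑ j, h (z j) := by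
        rw [Finset.sum_sub_distrib, Finset.sum_const, Finset.card_univ, Fintype.card_fin]
        push_cast
        ring
      rw [hS] at hreal
      have := (mul_lt_mul_iff_right₀ hn').2 hreal
      rw [← mul_assoc, mul_inv_cancel₀ hn'.ne', one_mul] at this
      nlinarith
    have hRb : β ≤ (R t - ρ) + 5*ε/6 := hRcont i i.2 t (hSK ht) hti
    by_cases hzero : ∃ j, ‖t - z j‖ = 0
    · obtain ⟨j, hj⟩ := hzero
      rw [Finset.prod_eq_zero (Finset.mem_univ j) hj, mul_zero]
      positivity
    · push_neg at hzero
      have hpos : ∀ j, 0 < ‖t - z j‖ :=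
        fun j => (norm_nonneg _).lt_of_ne (Ne.symm (hzero j))
      have hsum : ∑ j, Real.log (‖t - z j‖) ≤ ∑ j, h (z j) :=
        Finset.sum_le_sum fun j _ => hlogle i i.2 t hti (z j) (hzK j) (hzero j)
      have hprod : ∏ j, ‖t - z j‖
          = Real.exp (∑ j, Real.log (‖t - z j‖)) := by
        rw [Real.exp_sum]
        exact Finset.prod_congr rfl fun j _ => (Real.exp_log (hpos j)).symm
      rw [hprod, ← Real.exp_add]
      apply Real.exp_le_exp.2
      have hchain : ∑ j, Real.log (‖t - z j‖) ≤ (n:ℝ) * ((R t - ρ) + ε) := by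
        have h5 : (n:ℝ) * β ≤ (n:ℝ) * ((R t - ρ) + ε) := by
          apply mul_le_mul_of_nonneg_left _ hn'.le
          rw [hβd] at hRb ⊢
          linarith
        linarith
      nlinarith [hchain]
end
end

section
/- If a measure τ on a compact set K ⊂ ℂ^N satisfies the weighted Bernstein–Markov inequality for weight e^{-R} (in L^1), then for every β > 0 it satisfies an L^β version: for every ε > 0 there is C > 0 such that ‖e^{-nR}p‖_K ≤ C(1+ε)^n (∫_K (e^{-nR}|p|)^β dτ)^{1/β} for all polynomials p of degree ≤ n and all n. -/
open MeasureTheory Complex Set Filter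
open scoped Topology ENNReal NNReal Real

noncomputable section

lemma low_aux {α : Type*} [MeasurableSpace α] (μ : Measure α) [IsFiniteMeasure μ]
    (f : α → ℝ) (hf0 : ∀ w, 0 ≤ f w) (hmeas : AEStronglyMeasurable f μ)
    (S : ℝ) (hS0 : 0 ≤ S) (hS : ∀ᵐ w ∂μ, f w ≤ S) {β : ℝ} (hβ : 0 < β) (hβ1 : β ≤ 1) :
    ∫ w, f w ∂μ ≤ S ^ (1 - β) * ∫ w, f w ^ β ∂μ := by
  have hmeasβ : AEStronglyMeasurable (fun w => f w ^ β) μ :=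
    (Real.continuous_rpow_const hβ.le).comp_aestronglyMeasurable hmeas
  have hint : Integrable (fun w => S ^ (1 - β) * f w ^ β) μ := by
    refine (memLp_one_iff_integrable.mp ?_)
    refine MemLp.of_bound (hmeasβ.const_mul _) (S ^ (1 - β) * S ^ β) ?_
    filter_upwards [hS] with w hw
    rw [Real.norm_of_nonneg (mul_nonneg (Real.rpow_nonneg hS0 _) (Real.rpow_nonneg (hf0 w) _))]
    exact mul_le_mul_of_nonneg_left
      (Real.rpow_le_rpow (hf0 w) hw hβ.le) (Real.rpow_nonneg hS0 _)
  rw [← integral_const_mul]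
  refine integral_mono_of_nonneg (Filter.Eventually.of_forall hf0) hint ?_
  filter_upwards [hS] with w hw
  rcases eq_or_lt_of_le (hf0 w) with h | h
  · rw [← h, Real.zero_rpow hβ.ne', mul_zero]
  · calc f w = f w ^ β * f w ^ (1 - β) := by
          rw [← Real.rpow_add h]; norm_num
    _ ≤ f w ^ β * S ^ (1 - β) :=
        mul_le_mul_of_nonneg_left (Real.rpow_le_rpow (hf0 w) hw (by linarith))
          (Real.rpow_nonneg (hf0 w) _)
    _ = S ^ (1 - β) * f w ^ β := mul_comm _ _

lemma high_aux {α : Type*} [MeasurableSpace α] (μ : Measure α) [IsFiniteMeasure μ]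
    (f : α → ℝ) (hf0 : ∀ w, 0 ≤ f w) (hmeas : AEStronglyMeasurable f μ)
    (S : ℝ) (hS : ∀ᵐ w ∂μ, f w ≤ S) {β : ℝ} (hβ1 : 1 < β) :
    ∫ w, f w ∂μ ≤ (∫ w, f w ^ β ∂μ) ^ (1/β) * ((μ Set.univ).toReal) ^ (1 - 1/β) := by
  have hβ : (0:ℝ) < β := lt_trans one_pos hβ1
  have hpq : β.HolderConjugate (β / (β - 1)) := .conjExponent hβ1
  have hfLp : MemLp f (ENNReal.ofReal β) μ := by
    refine MemLp.of_bound hmeas S ?_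
    filter_upwards [hS] with w hw
    rwa [Real.norm_of_nonneg (hf0 w)]
  have hgLp : MemLp (fun _ : α => (1:ℝ)) (ENNReal.ofReal (β / (β - 1))) μ := memLp_const _
  have H := integral_mul_le_Lp_mul_Lq_of_nonneg hpq
    (Filter.Eventually.of_forall hf0)
    (Filter.Eventually.of_forall (fun _ => zero_le_one)) hfLp hgLp
  simp only [mul_one, Real.one_rpow, integral_const, smul_eq_mul] at H
  have hq : 1 / (β / (β - 1)) = 1 - 1/β := by
    rw [one_div, ← hpq.one_sub_inv, one_div]
  rwa [hq] at H

lemma main_aux {α : Type*} [MeasurableSpace α] (μ : Measure α) [IsFiniteMeasure μ]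
    (f : α → ℝ) (hf0 : ∀ w, 0 ≤ f w) (hmeas : AEStronglyMeasurable f μ)
    (S : ℝ) (hS0 : 0 ≤ S) (hS : ∀ᵐ w ∂μ, f w ≤ S)
    {β : ℝ} (hβ : 0 < β) {A : ℝ} (hA : 0 < A)
    (hBMS : S ≤ A * ∫ w, f w ∂μ) :
    S ≤ max (A ^ (1/β)) (A * ((μ Set.univ).toReal) ^ (1 - 1/β)) *
      (∫ w, f w ^ β ∂μ) ^ (1/β) := by
  have hJ0 : 0 ≤ ∫ w, f w ^ β ∂μ := integral_nonneg fun w => Real.rpow_nonneg (hf0 w) β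
  set J := ∫ w, f w ^ β ∂μ with hJdef
  rcases le_or_gt β 1 with hble | hbgt
  · have hI := low_aux μ f hf0 hmeas S hS0 hS hβ hble
    rcases eq_or_lt_of_le hS0 with h0 | hSpos
    · rw [← h0]
      exact mul_nonneg (le_trans (Real.rpow_pos_of_pos hA _).le (le_max_left _ _))
        (Real.rpow_nonneg hJ0 _)
    · have key : S ^ β ≤ A * J := by
        have h1 : S ≤ A * (S ^ (1 - β) * J) := hBMS.trans (mul_le_mul_of_nonneg_left hI hA.le)
        have hT : (0:ℝ) < S ^ (1 - β) := Real.rpow_pos_of_pos hSpos _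
        have h2 : S * (S ^ (1-β))⁻¹ ≤ A * J := by
          calc S * (S^(1-β))⁻¹ ≤ (A * (S^(1-β) * J)) * (S^(1-β))⁻¹ :=
                mul_le_mul_of_nonneg_right h1 (inv_nonneg.2 hT.le)
            _ = A * J * (S^(1-β) * (S^(1-β))⁻¹) := by ring
            _ = A * J := by rw [mul_inv_cancel₀ hT.ne', mul_one]
        calc S ^ β = S ^ (1 - (1-β)) := by rw [show (1:ℝ) - (1-β) = β by ring]
          _ = S * (S^(1-β))⁻¹ := by rw [Real.rpow_sub hSpos, Real.rpow_one, div_eq_mul_inv]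
          _ ≤ A * J := h2
      have hfin : S ≤ (A * J) ^ (1/β) := by
        have h3 := Real.rpow_le_rpow (Real.rpow_nonneg hS0 β) key
          (by positivity : (0:ℝ) ≤ 1/β)
        rwa [← Real.rpow_mul hS0, mul_one_div_cancel hβ.ne', Real.rpow_one] at h3
      calc S ≤ (A*J)^(1/β) := hfin
        _ = A^(1/β) * J^(1/β) := Real.mul_rpow hA.le hJ0
        _ ≤ max (A ^ (1/β)) (A * ((μ Set.univ).toReal) ^ (1 - 1/β)) * J^(1/β) :=
            mul_le_mul_of_nonneg_right (le_max_left _ _) (Real.rpow_nonneg hJ0 _)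
  · have hI := high_aux μ f hf0 hmeas S hS hbgt
    calc S ≤ A * ∫ w, f w ∂μ := hBMS
      _ ≤ A * (J ^ (1/β) * ((μ Set.univ).toReal) ^ (1 - 1/β)) :=
          mul_le_mul_of_nonneg_left hI hA.le
      _ = (A * ((μ Set.univ).toReal) ^ (1-1/β)) * J ^ (1/β) := by ring
      _ ≤ max (A ^ (1/β)) (A * ((μ Set.univ).toReal) ^ (1 - 1/β)) * J^(1/β) :=
          mul_le_mul_of_nonneg_right (le_max_right _ _) (Real.rpow_nonneg hJ0 _)

theorem stmt4 (N : ℕ) (K : Set (Fin N → ℂ)) (hK : IsCompact K)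
    (R : (Fin N → ℂ) → ℝ) (hR : ContinuousOn R K) (τ : Measure (Fin N → ℂ))
    (hτK : τ Kᶜ = 0) (hsupp : ∀ U : Set (Fin N → ℂ), IsOpen U → (U ∩ K).Nonempty → τ U ≠ 0)
    (hBM : ∀ ε > 0, ∃ C > 0, ∀ (n : ℕ) (p : MvPolynomial (Fin N) ℂ), p.totalDegree ≤ n →
      ∀ z ∈ K, Real.exp (-(n : ℝ) * R z) * ‖MvPolynomial.eval z p‖ ≤
        C * (1 + ε) ^ n *
          ∫ w in K, Real.exp (-(n : ℝ) * R w) * ‖MvPolynomial.eval w p‖ ∂τ)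
    (β : ℝ) (hβ : 0 < β) :
    ∀ ε > 0, ∃ C > 0, ∀ (n : ℕ) (p : MvPolynomial (Fin N) ℂ), p.totalDegree ≤ n →
      ∀ z ∈ K, Real.exp (-(n : ℝ) * R z) * ‖MvPolynomial.eval z p‖ ≤
        C * (1 + ε) ^ n *
          (∫ w in K,
            (Real.exp (-(n : ℝ) * R w) * ‖MvPolynomial.eval w p‖) ^ β ∂τ) ^ (1/β) := by
  intro ε hε
  rcases Set.eq_empty_or_nonempty K with hKe | ⟨z₀, hz₀⟩
  · exact ⟨1, one_pos, fun n p _ z hz => by simp [hKe] at hz⟩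
  have hKm : MeasurableSet K := hK.isClosed.measurableSet
  obtain ⟨C₀, hC₀, hBM₀⟩ := hBM 1 one_pos
  have h1 : (1:ℝ) ≤ C₀ * (τ K).toReal := by
    have h := hBM₀ 0 1 (by simp) z₀ hz₀
    simpa [MeasureTheory.integral_const, Measure.restrict_apply_univ, Measure.real] using h
  have hτfin : τ K ≠ ⊤ := by
    intro h
    rw [h, ENNReal.toReal_top, mul_zero] at h1
    linarith
  haveI : IsFiniteMeasure (τ.restrict K) :=
    ⟨by rw [Measure.restrict_apply_univ]; exact lt_top_iff_ne_top.2 hτfin⟩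
  have hT0 : 0 ≤ (τ K).toReal := ENNReal.toReal_nonneg
  have hTpos : 0 < (τ K).toReal := by
    by_contra h
    push_neg at h
    nlinarith [mul_nonpos_of_nonneg_of_nonpos hC₀.le h]
  set ε' := min ε ((1+ε)^β - 1) with hε'def
  have hεβ : (1:ℝ) < (1+ε)^β :=
    (Real.one_lt_rpow_iff_of_pos (by linarith)).mpr (Or.inl ⟨by linarith, hβ⟩)
  have hε'pos : 0 < ε' := lt_min hε (by linarith)
  have hε'0 : (0:ℝ) ≤ 1 + ε' := by linarith
  obtain ⟨C, hC, hBMs⟩ := hBM ε' hε'pos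
  set T := (τ K).toReal with hTdef
  refine ⟨max (C ^ (1/β)) (C * T ^ (1 - 1/β)),
    lt_max_iff.mpr (Or.inl (Real.rpow_pos_of_pos hC _)), fun n p hdeg z hz => ?_⟩
  have hfc : ContinuousOn
      (fun w => Real.exp (-(n:ℝ) * R w) * ‖MvPolynomial.eval w p‖) K :=
    (Real.continuous_exp.comp_continuousOn (continuousOn_const.mul hR)).mul
      ((continuous_norm.comp (MvPolynomial.continuous_eval p)).continuousOn)
  have hf0 : ∀ w, 0 ≤ Real.exp (-(n:ℝ) * R w) * ‖MvPolynomial.eval w p‖ :=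
    fun w => mul_nonneg (Real.exp_nonneg _) (norm_nonneg _)
  obtain ⟨x₀, hx₀K, hx₀⟩ := hK.exists_isMaxOn ⟨z₀, hz₀⟩ hfc
  rw [isMaxOn_iff] at hx₀
  have hmeas : AEStronglyMeasurable (fun w => Real.exp (-(n:ℝ) * R w) * ‖MvPolynomial.eval w p‖) (τ.restrict K) := hfc.aestronglyMeasurable hKm
  have hSae : ∀ᵐ w ∂(τ.restrict K),
      Real.exp (-(n:ℝ) * R w) * ‖MvPolynomial.eval w p‖ ≤
      Real.exp (-(n:ℝ) * R x₀) * ‖MvPolynomial.eval x₀ p‖ :=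
    (ae_restrict_iff' hKm).2 (Filter.Eventually.of_forall hx₀)
  have hA : (0:ℝ) < C * (1+ε')^n := by positivity
  have key := main_aux (τ.restrict K) _ hf0 hmeas _ (hf0 x₀) hSae hβ hA
    (hBMs n p hdeg x₀ hx₀K)
  rw [Measure.restrict_apply_univ] at key
  have hJ0 : 0 ≤ ∫ w in K,
      (Real.exp (-(n:ℝ) * R w) * ‖MvPolynomial.eval w p‖) ^ β ∂τ :=
    integral_nonneg fun w => Real.rpow_nonneg (hf0 w) β
  -- bound the max coefficient
  have hεle : (1+ε')^(1/β) ≤ 1+ε := by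
    have h4 : (1+ε') ≤ (1+ε)^β := by
      have := min_le_right ε ((1+ε)^β - 1); linarith
    have h5 := Real.rpow_le_rpow hε'0 h4 (by positivity : (0:ℝ) ≤ 1/β)
    rwa [← Real.rpow_mul (by linarith : (0:ℝ) ≤ 1+ε), mul_one_div_cancel hβ.ne',
      Real.rpow_one] at h5
  have hb1 : (C * (1+ε')^n) ^ (1/β) ≤ C^(1/β) * (1+ε)^n := by
    rw [Real.mul_rpow hC.le (by positivity), ← Real.rpow_natCast (1+ε') n,
      ← Real.rpow_mul hε'0, mul_comm (n:ℝ), Real.rpow_mul hε'0, Real.rpow_natCast]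
    exact mul_le_mul_of_nonneg_left
      (pow_le_pow_left₀ (Real.rpow_nonneg hε'0 _) hεle n) (Real.rpow_nonneg hC.le _)
  have hb2 : (C * (1+ε')^n) * T ^ (1 - 1/β) ≤ (C * T ^ (1 - 1/β)) * (1+ε)^n := by
    have h6 : (1+ε')^n ≤ (1+ε)^n :=
      pow_le_pow_left₀ hε'0 (by have := min_le_left ε ((1+ε)^β - 1); linarith) n
    calc (C * (1+ε')^n) * T ^ (1 - 1/β) = (C * T ^ (1-1/β)) * (1+ε')^n := by ring
      _ ≤ (C * T ^ (1-1/β)) * (1+ε)^n :=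
        mul_le_mul_of_nonneg_left h6 (mul_nonneg hC.le (Real.rpow_nonneg hT0 _))
  have hmax : max ((C * (1+ε')^n) ^ (1/β)) ((C * (1+ε')^n) * T ^ (1 - 1/β)) ≤
      max (C ^ (1/β)) (C * T ^ (1 - 1/β)) * (1+ε)^n :=
    max_le
      (hb1.trans (mul_le_mul_of_nonneg_right (le_max_left _ _) (by positivity)))
      (hb2.trans (mul_le_mul_of_nonneg_right (le_max_right _ _) (by positivity)))
  calc Real.exp (-(n:ℝ) * R z) * ‖MvPolynomial.eval z p‖
      ≤ Real.exp (-(n:ℝ) * R x₀) * ‖MvPolynomial.eval x₀ p‖ := hx₀ z hz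
    _ ≤ max ((C * (1+ε')^n) ^ (1/β)) ((C * (1+ε')^n) * T ^ (1 - 1/β)) *
        (∫ w in K, (Real.exp (-(n:ℝ) * R w) * ‖MvPolynomial.eval w p‖) ^ β ∂τ)
          ^ (1/β) := key
    _ ≤ max (C ^ (1/β)) (C * T ^ (1 - 1/β)) * (1+ε)^n *
        (∫ w in K, (Real.exp (-(n:ℝ) * R w) * ‖MvPolynomial.eval w p‖) ^ β ∂τ)
          ^ (1/β) :=
      mul_le_mul_of_nonneg_right hmax (Real.rpow_nonneg hJ0 _)
end
end

section
/- Lebesgue measure on ℝ satisfies the strong Bernstein–Markov inequality on any finite union of disjoint closed intervals K ⊂ ℝ: for every continuous R : K → ℝ and ε > 0 there is C > 0 with sup_{x∈K} e^{-nR(x)}|p(x)| ≤ C(1+ε)^n ∫_K e^{-nR}|p| dx for all polynomials p of degree ≤ n. -/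
open MeasureTheory Complex Set Filter
open scoped Topology ENNReal NNReal Real

noncomputable section

section BMaux
open intervalIntegral


private def ww (n : ℕ) (k : Fin (2*n+1)) : ℝ → ℂ :=
  fun θ => Complex.exp ((((k : ℕ) : ℤ) - (n : ℤ)) * θ * Complex.I)

private lemma ww_cont (n : ℕ) (k : Fin (2*n+1)) : Continuous (ww n k) := by
  unfold ww
  exact Complex.continuous_exp.comp (by continuity)

private lemma cospow_mem (n j : ℕ) (hj : j ≤ n) :
    (fun θ : ℝ => ((Real.cos θ : ℂ)) ^ j) ∈ Submodule.span ℂ (Set.range (ww n)) := by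
  have hfun : (fun θ : ℝ => ((Real.cos θ : ℂ)) ^ j)
      = ∑ m ∈ Finset.range (j+1), ((j.choose m : ℂ)/2^j) •
          ww n ⟨2*(min m j) + (n - j), by omega⟩ := by
    funext θ
    have hc : (Real.cos θ : ℂ)
        = Complex.exp (θ*Complex.I)/2 + Complex.exp (-θ*Complex.I)/2 := by
      rw [Complex.ofReal_cos, Complex.cos]
      ring_nf
    rw [hc, add_pow]
    rw [Finset.sum_apply]
    refine Finset.sum_congr rfl fun m hm => ?_
    have hm' : m ≤ j := by simpa [Nat.lt_succ_iff] using hm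
    have h2 : (2:ℂ)^m * 2^(j-m) = 2^j := by rw [← pow_add]; congr 1; omega
    have hxm : (Complex.exp (θ*Complex.I)/2)^m = Complex.exp (m*(θ*Complex.I)) / 2^m := by
      rw [div_pow, ← Complex.exp_nat_mul]
    have hym : (Complex.exp (-θ*Complex.I)/2)^(j-m)
        = Complex.exp ((j-m : ℕ)*(-θ*Complex.I)) / 2^(j-m) := by
      rw [div_pow, ← Complex.exp_nat_mul]
    rw [hxm, hym]
    have hw : ww n ⟨2*(min m j) + (n - j), by omega⟩ θ
        = Complex.exp ((m:ℂ)*(θ*Complex.I) + (j-m : ℕ)*(-θ*Complex.I)) := by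
      show Complex.exp _ = _
      congr 1
      have h1 : ((((2*(min m j) + (n - j) : ℕ) : ℤ)) : ℂ) = 2*(m:ℂ) + n - j := by
        have : ((2*(min m j) + (n - j) : ℕ) : ℤ) = 2*(m:ℤ) + n - j := by omega
        rw [this]; push_cast; ring
      rw [h1]
      push_cast [Nat.cast_sub hm']
      ring
    rw [Pi.smul_apply, hw, smul_eq_mul, Complex.exp_add]
    field_simp
    rw [← h2]
    ring
  rw [hfun]
  exact Submodule.sum_mem _ fun m _ => Submodule.smul_mem _ _
    (Submodule.subset_span ⟨_, rfl⟩)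

private lemma eval_cos_rep (n : ℕ) (p : Polynomial ℂ) (hp : p.natDegree ≤ n) :
    ∃ a : Fin (2*n+1) → ℂ, ∀ θ : ℝ,
      p.eval (Real.cos θ : ℂ) = ∑ k, a k * ww n k θ := by
  have hmem : (fun θ : ℝ => p.eval (Real.cos θ : ℂ))
      ∈ Submodule.span ℂ (Set.range (ww n)) := by
    have hfun : (fun θ : ℝ => p.eval (Real.cos θ : ℂ))
        = ∑ j ∈ Finset.range (n+1), p.coeff j • (fun θ : ℝ => ((Real.cos θ : ℂ))^j) := by
      funext θ
      rw [Polynomial.eval_eq_sum_range' (Nat.lt_succ_of_le hp), Finset.sum_apply]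
      simp [smul_eq_mul]
    rw [hfun]
    exact Submodule.sum_mem _ fun j hj => Submodule.smul_mem _ _
      (cospow_mem n j (by simpa [Nat.lt_succ_iff] using hj))
  rw [Submodule.mem_span_range_iff_exists_fun] at hmem
  obtain ⟨a, ha⟩ := hmem
  refine ⟨a, fun θ => ?_⟩
  have := congrFun ha θ
  rw [Finset.sum_apply] at this
  simp only [Pi.smul_apply, smul_eq_mul] at this
  rw [← this]



private lemma integral_exp_diff (c : ℤ) :
    ∫ θ in (0:ℝ)..(2*π), Complex.exp ((c:ℂ) * θ * Complex.I)
      = if c = 0 then ((2*π:ℝ):ℂ) else 0 := by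
  by_cases h : c = 0
  · subst h
    simp
  · have hc : (c:ℂ) * Complex.I ≠ 0 :=
      mul_ne_zero (by exact_mod_cast h) Complex.I_ne_zero
    have hfun : (fun θ:ℝ => Complex.exp ((c:ℂ) * θ * Complex.I))
        = fun θ:ℝ => Complex.exp (((c:ℂ) * Complex.I) * θ) := by
      funext θ; congr 1; ring
    rw [hfun, integral_exp_mul_complex hc]
    have h1 : Complex.exp ((c:ℂ) * Complex.I * ((2*π:ℝ):ℂ)) = 1 := by
      rw [← Complex.exp_int_mul_two_pi_mul_I c]
      congr 1
      push_cast
      ring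
    rw [if_neg h, h1]
    simp

private lemma coeff_bound (n : ℕ) (f : ℝ → ℂ) (hf : Continuous f) (a : Fin (2*n+1) → ℂ)
    (ha : ∀ θ, f θ = ∑ k, a k * ww n k θ) (j : Fin (2*n+1)) :
    ‖a j‖ ≤ (2*π)⁻¹ * ∫ θ in (0:ℝ)..(2*π), ‖f θ‖ := by
  set e : ℝ → ℂ := fun θ => Complex.exp ((-((((j:ℕ):ℤ) - (n:ℤ)):ℂ)) * θ * Complex.I) with he
  have key : ∫ θ in (0:ℝ)..(2*π), f θ * e θ = a j * ((2*π:ℝ):ℂ) := by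
    have h1 : ∀ θ:ℝ, f θ * e θ
        = ∑ k : Fin (2*n+1), a k *
            Complex.exp ((((((k:ℕ):ℤ) - ((j:ℕ):ℤ) : ℤ)):ℂ) * θ * Complex.I) := by
      intro θ
      rw [ha θ, Finset.sum_mul]
      refine Finset.sum_congr rfl fun k _ => ?_
      show a k * ww n k θ * e θ = _
      unfold ww
      rw [he, mul_assoc, ← Complex.exp_add]
      congr 2
      push_cast
      ring
    rw [intervalIntegral.integral_congr (g := fun θ => ∑ k : Fin (2*n+1), a k *
          Complex.exp ((((((k:ℕ):ℤ) - ((j:ℕ):ℤ) : ℤ)):ℂ) * θ * Complex.I))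
        (fun θ _ => h1 θ)]
    rw [intervalIntegral.integral_finset_sum (fun k _ =>
      (Continuous.intervalIntegrable (by fun_prop) _ _))]
    have h2 : ∀ k : Fin (2*n+1),
        (∫ θ in (0:ℝ)..(2*π), a k *
          Complex.exp ((((((k:ℕ):ℤ) - ((j:ℕ):ℤ) : ℤ)):ℂ) * θ * Complex.I))
        = if k = j then a j * ((2*π:ℝ):ℂ) else 0 := by
      intro k
      rw [intervalIntegral.integral_const_mul, integral_exp_diff (((k:ℕ):ℤ) - ((j:ℕ):ℤ))]
      by_cases h : k = j
      · subst h; simp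
      · have hne : (((k:ℕ):ℤ) - ((j:ℕ):ℤ)) ≠ 0 := by
          intro hcon
          exact h (Fin.ext (by omega))
        rw [if_neg hne, if_neg h, mul_zero]
    rw [Finset.sum_congr rfl (fun k _ => h2 k), Finset.sum_ite_eq' Finset.univ j]
    rw [if_pos (Finset.mem_univ j)]
  have hnorm : ∀ θ:ℝ, ‖f θ * e θ‖ = ‖f θ‖ := by
    intro θ
    rw [norm_mul]
    have harg : (-((((j:ℕ):ℤ) - (n:ℤ)):ℂ)) * θ * Complex.I
        = (((-((((j:ℕ):ℝ) - (n:ℝ))) * θ : ℝ)):ℂ) * Complex.I := by push_cast; ring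
    rw [he]
    show ‖f θ‖ * ‖Complex.exp _‖ = _
    rw [harg, Complex.norm_exp_ofReal_mul_I, mul_one]
  have habs : ‖a j‖ * (2*π) ≤ ∫ θ in (0:ℝ)..(2*π), ‖f θ‖ := by
    have h3 := intervalIntegral.norm_integral_le_integral_norm
      (f := fun θ => f θ * e θ) (a := (0:ℝ)) (b := 2*π) (μ := volume) (by positivity)
    rw [key] at h3
    have h4 : ‖a j * ((2*π:ℝ):ℂ)‖ = ‖a j‖ * (2*π) := by
      rw [norm_mul, Complex.norm_real]
      rw [Real.norm_eq_abs, abs_of_pos (by positivity)]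
    rw [h4] at h3
    calc ‖a j‖ * (2*π)
        ≤ ∫ θ in (0:ℝ)..(2*π), ‖f θ * e θ‖ := h3
      _ = ∫ θ in (0:ℝ)..(2*π), ‖f θ‖ :=
          intervalIntegral.integral_congr (fun θ _ => hnorm θ)
  have hπ : (0:ℝ) < 2*π := by positivity
  calc ‖a j‖ = (2*π)⁻¹ * (‖a j‖ * (2*π)) := by field_simp
    _ ≤ (2*π)⁻¹ * ∫ θ in (0:ℝ)..(2*π), ‖f θ‖ := by
        exact mul_le_mul_of_nonneg_left habs (by positivity)

private lemma subst_cos (g : ℝ → ℝ) (hg : Continuous g) (u v : ℝ) :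
    ∫ θ in u..v, Real.sin θ * g (Real.cos θ) = ∫ x in Real.cos v..Real.cos u, g x := by
  have h := intervalIntegral.integral_comp_smul_deriv (a := u) (b := v)
    (f := Real.cos) (f' := fun θ => -Real.sin θ) (g := g)
    (fun θ _ => Real.hasDerivAt_cos θ) (Real.continuous_sin.neg).continuousOn hg
  calc ∫ θ in u..v, Real.sin θ * g (Real.cos θ)
      = -∫ θ in u..v, (fun θ => -Real.sin θ) θ • (g ∘ Real.cos) θ := by
        rw [← intervalIntegral.integral_neg]
        refine intervalIntegral.integral_congr fun θ _ => ?_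
        simp [Function.comp, smul_eq_mul]
    _ = -∫ x in Real.cos u..Real.cos v, g x := by rw [h]
    _ = ∫ x in Real.cos v..Real.cos u, g x := by
        rw [intervalIntegral.integral_symm (Real.cos v) (Real.cos u), neg_neg]

private lemma sin_lb {δ θ : ℝ} (hδ0 : 0 < δ) (hδ : δ ≤ π/2) (h1 : δ ≤ θ) (h2 : θ ≤ π - δ) :
    Real.sin δ ≤ Real.sin θ := by
  have hpi := Real.pi_pos
  rcases le_or_gt θ (π/2) with h | h
  · exact Real.strictMonoOn_sin.monotoneOn ⟨by linarith, hδ⟩ ⟨by linarith, h⟩ h1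
  · rw [← Real.sin_pi_sub θ]
    exact Real.strictMonoOn_sin.monotoneOn ⟨by linarith, hδ⟩ ⟨by linarith, by linarith⟩
      (by linarith)

private lemma arith_aux {M N B s q : ℝ} (hM0 : 0 ≤ M) (hN : 0 ≤ N) (hB0 : 0 < B)
    (hq : 3 < q) (hs1 : 0 ≤ s⁻¹) (hsinv : s⁻¹ ≤ 4*B)
    (hfin : M ≤ B*s⁻¹*N/q + M/4) : M ≤ 2*B^2*N := by
  have h1 : B*s⁻¹*N ≤ 4*B^2*N := by
    nlinarith [mul_le_mul_of_nonneg_right (mul_le_mul_of_nonneg_left hsinv hB0.le) hN]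
  have h2 : B*s⁻¹*N/q ≤ 4*B^2*N/q := by gcongr
  have h3 : 4*B^2*N/q ≤ 4*B^2*N/3 := by
    gcongr
    all_goals first | positivity | linarith
  linarith

set_option maxHeartbeats 1000000 in
private lemma nik1 (n : ℕ) (p : Polynomial ℂ) (hp : p.natDegree ≤ n) (x : ℝ)
    (hx : x ∈ Set.Icc (-1:ℝ) 1) :
    ‖p.eval (x:ℂ)‖ ≤ 100*((n:ℝ)+1)^2 * ∫ y in Set.Icc (-1:ℝ) 1,
      ‖p.eval (y:ℂ)‖ := by
  have hpi := Real.pi_pos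
  set g : ℝ → ℝ := fun t => ‖p.eval (t:ℂ)‖ with hgdef
  have hgc : Continuous g := by
    exact continuous_norm.comp (p.continuous_aeval.comp Complex.continuous_ofReal)
  have hgnn : ∀ t, 0 ≤ g t := fun t => norm_nonneg _
  obtain ⟨x₀, hx₀, hmax⟩ := isCompact_Icc.exists_isMaxOn
    (Set.nonempty_Icc.2 (by norm_num : (-1:ℝ) ≤ 1)) hgc.continuousOn
  set M := g x₀ with hMdef
  have hM0 : 0 ≤ M := hgnn x₀
  set N := ∫ y in Set.Icc (-1:ℝ) 1, g y with hNdef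
  have hNnn : 0 ≤ N := setIntegral_nonneg measurableSet_Icc fun y _ => hgnn y
  obtain ⟨a, ha⟩ := eval_cos_rep n p hp
  have hfc : Continuous (fun θ:ℝ => p.eval ((Real.cos θ : ℝ):ℂ)) :=
    p.continuous_aeval.comp (Complex.continuous_ofReal.comp Real.continuous_cos)
  set I2 := ∫ θ in (0:ℝ)..(2*π), g (Real.cos θ) with hI2def
  have hMa : M ≤ ∑ k : Fin (2*n+1), ‖a k‖ := by
    have hx₀' : Real.cos (Real.arccos x₀) = x₀ := Real.cos_arccos hx₀.1 hx₀.2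
    calc M = ‖p.eval ((Real.cos (Real.arccos x₀) : ℝ):ℂ)‖ := by rw [hx₀']
      _ = ‖∑ k : Fin (2*n+1), a k * ww n k (Real.arccos x₀)‖ := by rw [ha]
      _ ≤ ∑ k : Fin (2*n+1), ‖a k * ww n k (Real.arccos x₀)‖ :=
          norm_sum_le _ _
      _ = ∑ k : Fin (2*n+1), ‖a k‖ := by
          refine Finset.sum_congr rfl fun k _ => ?_
          rw [norm_mul]
          have : ww n k (Real.arccos x₀)
              = Complex.exp (((((((k:ℕ):ℤ) - (n:ℤ)):ℝ) * Real.arccos x₀ : ℝ):ℂ) * Complex.I) := by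
            unfold ww; congr 1; push_cast; ring
          rw [this, Complex.norm_exp_ofReal_mul_I, mul_one]
  have hcb : ∀ k : Fin (2*n+1), ‖a k‖ ≤ (2*π)⁻¹ * I2 := by
    intro k
    exact coeff_bound n _ hfc a ha k
  have hii : ∀ u v : ℝ, IntervalIntegrable (fun θ => g (Real.cos θ)) volume u v :=
    fun u v => (hgc.comp Real.continuous_cos).intervalIntegrable u v
  set δ := π/(8*(2*(n:ℝ)+1)) with hδdef
  have hB1 : (1:ℝ) ≤ 2*(n:ℝ)+1 := by
    have := Nat.cast_nonneg (α := ℝ) n; linarith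
  have hδ0 : 0 < δ := by positivity
  have hδle : δ ≤ π/2 := by
    rw [hδdef, div_le_div_iff₀ (by positivity : (0:ℝ) < 8*(2*(n:ℝ)+1)) two_pos]
    nlinarith
  have hs : 2/π*δ ≤ Real.sin δ := Real.mul_le_sin hδ0.le (by linarith)
  have hs0 : 0 < Real.sin δ := lt_of_lt_of_le (by positivity) hs
  -- edge bound
  have hedge : ∀ u v : ℝ, u ≤ v → (∫ θ in u..v, g (Real.cos θ)) ≤ (v - u) * M := by
    intro u v huv
    calc (∫ θ in u..v, g (Real.cos θ)) ≤ ∫ _ in u..v, M := by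
          refine intervalIntegral.integral_mono_on huv (hii u v)
            (intervalIntegrable_const) fun θ _ => ?_
          exact hmax ⟨Real.neg_one_le_cos θ, Real.cos_le_one θ⟩
      _ = (v - u) * M := by rw [intervalIntegral.integral_const, smul_eq_mul]
  -- N as interval integral
  have hNint : N = ∫ x in (-1:ℝ)..1, g x := by
    rw [intervalIntegral.integral_of_le (by norm_num : (-1:ℝ) ≤ 1), hNdef,
      integral_Icc_eq_integral_Ioc]
  have hcosδ0 : 0 ≤ Real.cos δ := Real.cos_nonneg_of_mem_Icc ⟨by linarith, hδle⟩
  -- middle bound 1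
  have hmid1 : (∫ θ in δ..(π-δ), g (Real.cos θ)) ≤ (Real.sin δ)⁻¹ * N := by
    calc (∫ θ in δ..(π-δ), g (Real.cos θ))
        ≤ ∫ θ in δ..(π-δ), (Real.sin δ)⁻¹ * (Real.sin θ * g (Real.cos θ)) := by
          refine intervalIntegral.integral_mono_on (by linarith) (hii _ _)
            (Continuous.intervalIntegrable (by fun_prop) _ _) fun θ hθ => ?_
          have hsθ := sin_lb hδ0 hδle hθ.1 hθ.2
          have h1 : (1:ℝ) ≤ (Real.sin δ)⁻¹ * Real.sin θ := by
            rw [← inv_mul_cancel₀ hs0.ne']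
            exact mul_le_mul_of_nonneg_left hsθ (by positivity)
          nlinarith [hgnn (Real.cos θ)]
      _ = (Real.sin δ)⁻¹ * ∫ θ in δ..(π-δ), Real.sin θ * g (Real.cos θ) :=
          intervalIntegral.integral_const_mul _ _
      _ = (Real.sin δ)⁻¹ * ∫ x in (Real.cos (π-δ))..(Real.cos δ), g x := by
          rw [subst_cos g hgc]
      _ ≤ (Real.sin δ)⁻¹ * ∫ x in (-1:ℝ)..1, g x := by
          refine mul_le_mul_of_nonneg_left ?_ (by positivity)
          refine intervalIntegral.integral_mono_interval (Real.neg_one_le_cos _)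
            ?_ (Real.cos_le_one _) ?_ (hgc.intervalIntegrable _ _)
          · rw [Real.cos_pi_sub]; linarith
          · exact Filter.Eventually.of_forall fun y => hgnn y
      _ = (Real.sin δ)⁻¹ * N := by rw [hNint]
  -- middle bound 2
  have hmid2 : (∫ θ in (π+δ)..(2*π-δ), g (Real.cos θ)) ≤ (Real.sin δ)⁻¹ * N := by
    have hkey : ∀ θ ∈ Set.Icc (π+δ) (2*π-δ), Real.sin δ ≤ -Real.sin θ := by
      intro θ hθ
      have : Real.sin (θ - π) = -Real.sin θ := by
        rw [Real.sin_sub]; simp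
      rw [← this]
      exact sin_lb hδ0 hδle (by linarith [hθ.1]) (by linarith [hθ.2])
    calc (∫ θ in (π+δ)..(2*π-δ), g (Real.cos θ))
        ≤ ∫ θ in (π+δ)..(2*π-δ), (Real.sin δ)⁻¹ * (-(Real.sin θ * g (Real.cos θ))) := by
          refine intervalIntegral.integral_mono_on (by linarith) (hii _ _)
            (Continuous.intervalIntegrable (by fun_prop) _ _) fun θ hθ => ?_
          have hsθ := hkey θ hθ
          have h1 : (1:ℝ) ≤ (Real.sin δ)⁻¹ * (-Real.sin θ) := by
            rw [← inv_mul_cancel₀ hs0.ne']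
            exact mul_le_mul_of_nonneg_left hsθ (by positivity)
          nlinarith [hgnn (Real.cos θ)]
      _ = (Real.sin δ)⁻¹ * -∫ θ in (π+δ)..(2*π-δ), Real.sin θ * g (Real.cos θ) := by
          rw [← intervalIntegral.integral_neg, intervalIntegral.integral_const_mul]
      _ = (Real.sin δ)⁻¹ * -∫ x in (Real.cos (2*π-δ))..(Real.cos (π+δ)), g x := by
          rw [subst_cos g hgc]
      _ = (Real.sin δ)⁻¹ * ∫ x in (Real.cos (π+δ))..(Real.cos (2*π-δ)), g x := by
          rw [intervalIntegral.integral_symm]; ring_nf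
      _ ≤ (Real.sin δ)⁻¹ * ∫ x in (-1:ℝ)..1, g x := by
          refine mul_le_mul_of_nonneg_left ?_ (by positivity)
          have hc1 : Real.cos (π+δ) = -Real.cos δ := by rw [Real.cos_add]; simp
          have hc2 : Real.cos (2*π-δ) = Real.cos δ := by
            rw [Real.cos_sub]; simp [Real.cos_two_pi, Real.sin_two_pi]
          refine intervalIntegral.integral_mono_interval ?_ ?_ ?_ ?_
            (hgc.intervalIntegrable _ _)
          · rw [hc1]; linarith [Real.cos_le_one δ]
          · rw [hc1, hc2]; linarith
          · rw [hc2]; exact Real.cos_le_one δ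
          · exact Filter.Eventually.of_forall fun y => hgnn y
      _ = (Real.sin δ)⁻¹ * N := by rw [hNint]
  -- splitting
  have hsplit : I2 = (∫ θ in (0:ℝ)..δ, g (Real.cos θ))
      + (∫ θ in δ..(π-δ), g (Real.cos θ))
      + (∫ θ in (π-δ)..(π+δ), g (Real.cos θ))
      + (∫ θ in (π+δ)..(2*π-δ), g (Real.cos θ))
      + (∫ θ in (2*π-δ)..(2*π), g (Real.cos θ)) := by
    rw [hI2def]
    rw [← intervalIntegral.integral_add_adjacent_intervals (hii 0 δ) (hii δ (2*π)),
      ← intervalIntegral.integral_add_adjacent_intervals (hii δ (π-δ)) (hii (π-δ) (2*π)),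
      ← intervalIntegral.integral_add_adjacent_intervals (hii (π-δ) (π+δ)) (hii (π+δ) (2*π)),
      ← intervalIntegral.integral_add_adjacent_intervals (hii (π+δ) (2*π-δ)) (hii (2*π-δ) (2*π))]
    ring
  have hI2bound : I2 ≤ 2*(Real.sin δ)⁻¹*N + 4*δ*M := by
    have e1 := hedge 0 δ hδ0.le
    have e2 := hedge (π-δ) (π+δ) (by linarith)
    have e3 := hedge (2*π-δ) (2*π) (by linarith)
    rw [hsplit]
    have : (δ - 0) * M + (π+δ-(π-δ))*M + (2*π-(2*π-δ))*M = 4*δ*M := by ring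
    linarith [hmid1, hmid2]
  -- combine
  have hMI : M ≤ (2*(n:ℝ)+1) * ((2*π)⁻¹ * I2) := by
    calc M ≤ ∑ k : Fin (2*n+1), ‖a k‖ := hMa
      _ ≤ ∑ _k : Fin (2*n+1), (2*π)⁻¹ * I2 := Finset.sum_le_sum fun k _ => hcb k
      _ = ((2*n+1:ℕ):ℝ) * ((2*π)⁻¹ * I2) := by
          rw [Finset.sum_const, Finset.card_univ, Fintype.card_fin, nsmul_eq_mul]
      _ = (2*(n:ℝ)+1) * ((2*π)⁻¹ * I2) := by push_cast; ring
  have hsinv : (Real.sin δ)⁻¹ ≤ 4*(2*(n:ℝ)+1) := by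
    have hslb : 1/(4*(2*(n:ℝ)+1)) ≤ Real.sin δ := by
      have : 2/π*δ = 1/(4*(2*(n:ℝ)+1)) := by
        rw [hδdef]; field_simp; try ring
      linarith
    calc (Real.sin δ)⁻¹ ≤ (1/(4*(2*(n:ℝ)+1)))⁻¹ := by
          exact inv_anti₀ (by positivity) hslb
      _ = 4*(2*(n:ℝ)+1) := by rw [one_div, inv_inv]
  -- final arithmetic
  have hI20 : 0 ≤ I2 := by
    rw [hI2def]
    exact intervalIntegral.integral_nonneg (by positivity) fun θ _ => hgnn _
  set B := 2*(n:ℝ)+1 with hBdef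
  have hfin : M ≤ B * ((2*π)⁻¹ * (2*(Real.sin δ)⁻¹*N + 4*δ*M)) := by
    refine hMI.trans ?_
    exact mul_le_mul_of_nonneg_left (mul_le_mul_of_nonneg_left hI2bound (by positivity))
      (by positivity)
  have heq : B * ((2*π)⁻¹ * (2*(Real.sin δ)⁻¹*N + 4*δ*M))
      = B*(Real.sin δ)⁻¹*N/π + M/4 := by
    rw [hδdef]
    field_simp
    ring
  rw [heq] at hfin
  have hB0 : (0:ℝ) < B := by positivity
  clear_value I2 δ M N B
  have hMle : M ≤ 2*B^2*N :=
    arith_aux hM0 hNnn hB0 Real.pi_gt_three (inv_nonneg.2 hs0.le) hsinv hfin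
  have hMfin : M ≤ 8*((n:ℝ)+1)^2*N := by
    have hB2 : B^2*N ≤ 4*((n:ℝ)+1)^2*N := by
      have : B^2 ≤ 4*((n:ℝ)+1)^2 := by rw [hBdef]; nlinarith [Nat.cast_nonneg (α := ℝ) n]
      exact mul_le_mul_of_nonneg_right this hNnn
    linarith
  calc ‖p.eval (x:ℂ)‖ = g x := rfl
    _ ≤ M := by rw [hMdef]; exact hmax hx
    _ ≤ 8*((n:ℝ)+1)^2*N := hMfin
    _ ≤ 100*((n:ℝ)+1)^2*N := by nlinarith

private lemma absPolyCont (p : Polynomial ℂ) :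
    Continuous fun s:ℝ => ‖p.eval (s:ℂ)‖ :=
  continuous_norm.comp (p.continuous_aeval.comp Complex.continuous_ofReal)

private lemma nik2 (n : ℕ) (p : Polynomial ℂ) (hp : p.natDegree ≤ n) (c d : ℝ) (hcd : c < d)
    (x : ℝ) (hx : x ∈ Set.Icc c d) :
    ‖p.eval (x:ℂ)‖ ≤ (200*((n:ℝ)+1)^2/(d-c)) *
      ∫ y in Set.Icc c d, ‖p.eval (y:ℂ)‖ := by
  set q : Polynomial ℂ := p.comp (Polynomial.C (((d-c)/2 : ℝ):ℂ) * Polynomial.X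
    + Polynomial.C (((c+d)/2 : ℝ):ℂ)) with hqdef
  have hα : (((d-c)/2 : ℝ):ℂ) ≠ 0 := by
    simp only [ne_eq, Complex.ofReal_eq_zero]
    intro h
    have : d - c > 0 := by linarith
    nlinarith
  have hq : q.natDegree ≤ n := by
    rw [hqdef, Polynomial.natDegree_comp, Polynomial.natDegree_linear hα, mul_one]
    exact hp
  have hqeval : ∀ y : ℝ, q.eval (y:ℂ) = p.eval ((((d-c)/2*y + (c+d)/2 : ℝ)):ℂ) := by
    intro y
    rw [hqdef, Polynomial.eval_comp]
    congr 1
    simp only [Polynomial.eval_add, Polynomial.eval_mul, Polynomial.eval_C, Polynomial.eval_X]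
    push_cast
    ring
  set y := (2*x - (c+d))/(d-c) with hy
  have hy1 : y ∈ Set.Icc (-1:ℝ) 1 := by
    constructor
    · rw [hy, le_div_iff₀ (by linarith : (0:ℝ) < d - c)]
      linarith [hx.1]
    · rw [hy, div_le_one (by linarith : (0:ℝ) < d - c)]
      linarith [hx.2]
  have hxy : (d-c)/2*y + (c+d)/2 = x := by
    rw [hy]; field_simp [sub_ne_zero.mpr hcd.ne']; ring
  have h1 := nik1 n q hq y hy1
  rw [hqeval y, hxy] at h1
  have hsub : (∫ t in Set.Icc (-1:ℝ) 1, ‖q.eval (t:ℂ)‖)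
      = (2/(d-c)) * ∫ s in Set.Icc c d, ‖p.eval (s:ℂ)‖ := by
    have hgc := absPolyCont p
    have key := intervalIntegral.integral_comp_smul_deriv (a := (-1:ℝ)) (b := 1)
      (f := fun t => (d-c)/2*t + (c+d)/2) (f' := fun _ => (d-c)/2)
      (g := fun s => ‖p.eval (s:ℂ)‖)
      (fun t _ => by
        simpa using (((hasDerivAt_id t).const_mul ((d-c)/2)).add_const ((c+d)/2)))
      continuousOn_const hgc
    simp only [Function.comp, smul_eq_mul] at key
    have hf1 : (d-c)/2*(-1:ℝ) + (c+d)/2 = c := by ring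
    have hf2 : (d-c)/2*(1:ℝ) + (c+d)/2 = d := by ring
    rw [hf1, hf2] at key
    have hdc : (0:ℝ) < d - c := by linarith
    calc (∫ t in Set.Icc (-1:ℝ) 1, ‖q.eval (t:ℂ)‖)
        = ∫ t in (-1:ℝ)..1, ‖q.eval (t:ℂ)‖ := by
          rw [intervalIntegral.integral_of_le (by norm_num : (-1:ℝ) ≤ 1),
            integral_Icc_eq_integral_Ioc]
      _ = ∫ t in (-1:ℝ)..1, (2/(d-c)) *
            ((d-c)/2 * ‖p.eval ((((d-c)/2*t + (c+d)/2 : ℝ)):ℂ)‖) := by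
          refine intervalIntegral.integral_congr fun t _ => ?_
          rw [hqeval t]
          field_simp
      _ = (2/(d-c)) * ∫ t in (-1:ℝ)..1,
            (d-c)/2 * ‖p.eval ((((d-c)/2*t + (c+d)/2 : ℝ)):ℂ)‖ := by
          rw [intervalIntegral.integral_const_mul]
      _ = (2/(d-c)) * ∫ s in c..d, ‖p.eval (s:ℂ)‖ := by rw [key]
      _ = (2/(d-c)) * ∫ s in Set.Icc c d, ‖p.eval (s:ℂ)‖ := by
          rw [intervalIntegral.integral_of_le hcd.le, integral_Icc_eq_integral_Ioc]
  rw [hsub] at h1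
  calc ‖p.eval (x:ℂ)‖
      ≤ 100*((n:ℝ)+1)^2 * ((2/(d-c)) * ∫ s in Set.Icc c d, ‖p.eval (s:ℂ)‖) := h1
    _ = (200*((n:ℝ)+1)^2/(d-c)) * ∫ y in Set.Icc c d, ‖p.eval (y:ℂ)‖ := by
        ring

private lemma poly_le_geom {r : ℝ} (hr : 1 < r) :
    ∃ A > 0, ∀ n : ℕ, ((n:ℝ)+1)^2 ≤ A * r^n := by
  have h0 : Tendsto (fun n : ℕ => ((n:ℝ))^2 / r^n) atTop (𝓝 0) :=
    tendsto_pow_const_div_const_pow_of_one_lt 2 hr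
  have h1 : Tendsto (fun n : ℕ => ((n:ℝ)+1)^2 / r^(n+1)) atTop (𝓝 0) := by
    have h := h0.comp (tendsto_add_atTop_nat 1)
    refine h.congr fun n => ?_
    simp only [Function.comp_apply]
    push_cast
    ring
  have h2 : Tendsto (fun n : ℕ => ((n:ℝ)+1)^2 / r^n) atTop (𝓝 0) := by
    have h3 := h1.const_mul r
    rw [mul_zero] at h3
    refine h3.congr fun n => ?_
    have hrn : r^n ≠ 0 := (pow_pos (by linarith) n).ne'
    field_simp [pow_succ]
    ring
  obtain ⟨N, hN0⟩ := Metric.tendsto_atTop.1 h2 1 one_pos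
  have hN : ∀ n ≥ N, ((n:ℝ)+1)^2 / r^n < 1 := by
    intro n hn
    have := hN0 n hn
    rw [Real.dist_eq, sub_zero] at this
    exact (abs_lt.1 this).2
  have hfnn : ∀ k:ℕ, 0 ≤ ((k:ℝ)+1)^2 / r^k := fun k => by positivity
  set A := 1 + ∑ k ∈ Finset.range (N+1), ((k:ℝ)+1)^2 / r^k with hA
  have hsum0 : 0 ≤ ∑ k ∈ Finset.range (N+1), ((k:ℝ)+1)^2 / r^k :=
    Finset.sum_nonneg fun k _ => hfnn k
  have hA0 : 0 < A := by rw [hA]; linarith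
  refine ⟨A, hA0, fun n => ?_⟩
  have hrn : (0:ℝ) < r^n := pow_pos (by linarith) n
  have hfA : ((n:ℝ)+1)^2 / r^n ≤ A := by
    rcases le_or_gt n N with h | h
    · calc ((n:ℝ)+1)^2/r^n ≤ ∑ k ∈ Finset.range (N+1), ((k:ℝ)+1)^2/r^k :=
          Finset.single_le_sum (fun k _ => hfnn k) (Finset.mem_range.2 (by omega))
        _ ≤ A := by rw [hA]; linarith
    · have := hN n (by omega)
      rw [hA]
      linarith
  rw [div_le_iff₀ hrn] at hfA
  linarith


end BMaux

theorem stmt8 (K : Set ℝ) (m : ℕ) (a b : Fin m → ℝ) (hab : ∀ i, a i < b i)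
    (hdisj : Pairwise fun i j => Disjoint (Set.Icc (a i) (b i)) (Set.Icc (a j) (b j)))
    (hK : K = ⋃ i, Set.Icc (a i) (b i)) :
    ∀ R : ℝ → ℝ, ContinuousOn R K →
    ∀ ε > 0, ∃ C > 0, ∀ (n : ℕ) (p : Polynomial ℂ), p.natDegree ≤ n →
      ∀ x ∈ K, Real.exp (-(n : ℝ) * R x) * ‖p.eval (x : ℂ)‖ ≤
        C * (1 + ε) ^ n *
          ∫ y in K, Real.exp (-(n : ℝ) * R y) * ‖p.eval (y : ℂ)‖ := by
  intro R hR ε hε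
  rcases Nat.eq_zero_or_pos m with hm | hm
  · subst hm
    refine ⟨1, one_pos, ?_⟩
    intro n p hp x hx
    rw [hK] at hx
    obtain ⟨i, _⟩ := Set.mem_iUnion.1 hx
    exact i.elim0
  · have hKc : IsCompact K := by
      rw [hK]; exact isCompact_iUnion fun i => isCompact_Icc
    have hKm : MeasurableSet K := by
      rw [hK]; exact MeasurableSet.iUnion fun i => measurableSet_Icc
    set r := Real.sqrt (1+ε) with hr
    have hrsq : r*r = 1+ε := Real.mul_self_sqrt (by linarith)
    have hr1 : 1 < r := by nlinarith [Real.sqrt_nonneg (1+ε)]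
    set η := Real.log r with hη
    have hη0 : 0 < η := Real.log_pos hr1
    have hexp : ∀ n : ℕ, Real.exp ((n:ℝ)*η) = r^n := by
      intro n
      rw [hη, Real.exp_nat_mul, Real.exp_log (by linarith)]
    have hUC := hKc.uniformContinuousOn_of_continuous hR
    rw [Metric.uniformContinuousOn_iff] at hUC
    obtain ⟨δ, hδ0, hδ⟩ := hUC η hη0
    obtain ⟨i0⟩ : Nonempty (Fin m) := ⟨⟨0, hm⟩⟩
    set L := Finset.univ.inf' (Finset.univ_nonempty_iff.2 ⟨i0⟩) (fun i => b i - a i) with hLdef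
    have hL0 : 0 < L := by
      rw [hLdef, Finset.lt_inf'_iff]
      exact fun i _ => sub_pos.2 (hab i)
    have hLle : ∀ i, L ≤ b i - a i := fun i => Finset.inf'_le _ (Finset.mem_univ i)
    set L₀ := min L (δ/2) with hL₀def
    have hL₀0 : 0 < L₀ := lt_min hL0 (by linarith)
    have hL₀δ : L₀ < δ := lt_of_le_of_lt (min_le_right _ _) (by linarith)
    have hL₀L : L₀ ≤ L := min_le_left _ _
    obtain ⟨A, hA0, hA⟩ := poly_le_geom hr1
    refine ⟨200*A/L₀ + 1, by positivity, ?_⟩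
    intro n p hp x hx
    have hxK := hx
    rw [hK] at hx
    obtain ⟨i, hxi'⟩ := Set.mem_iUnion.1 hx
    have hxi : x ∈ Set.Icc (a i) (b i) := hxi'
    set c := max (a i) (min x (b i - L₀)) with hcdef
    have hca : a i ≤ c := le_max_left _ _
    have haiL : a i ≤ b i - L₀ := by linarith [hLle i]
    have hcb2 : c + L₀ ≤ b i := by
      have h1 : c ≤ b i - L₀ := max_le haiL (min_le_right _ _)
      linarith
    have hxJ : x ∈ Set.Icc c (c + L₀) := by
      constructor
      · exact max_le hxi.1 (min_le_left _ _)
      · rcases le_or_gt x (b i - L₀) with h | h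
        · have h2 : min x (b i - L₀) = x := min_eq_left h
          have h3 : min x (b i - L₀) ≤ c := le_max_right _ _
          rw [h2] at h3
          linarith
        · have h2 : min x (b i - L₀) = b i - L₀ := min_eq_right h.le
          have h3 : min x (b i - L₀) ≤ c := le_max_right _ _
          rw [h2] at h3
          linarith [hxi.2]
    have hJK : Set.Icc c (c+L₀) ⊆ K := by
      rw [hK]
      intro t ht
      exact Set.mem_iUnion.2 ⟨i, ⟨by linarith [ht.1], by linarith [ht.2]⟩⟩
    set w := fun y:ℝ => Real.exp (-(n:ℝ) * R y) * ‖p.eval (y:ℂ)‖ with hwdef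
    have hwcont : ContinuousOn w K := by
      apply ContinuousOn.mul
      · exact Real.continuous_exp.comp_continuousOn (continuousOn_const.mul hR)
      · exact (absPolyCont p).continuousOn
    have hwint : IntegrableOn w K := hwcont.integrableOn_compact hKc
    have hwnn : ∀ y, 0 ≤ w y := by
      intro y
      show 0 ≤ Real.exp (-(n:ℝ) * R y) * ‖p.eval (y:ℂ)‖
      positivity
    have hRxy : ∀ y ∈ Set.Icc c (c+L₀),
        Real.exp (-(n:ℝ)*R x) ≤ Real.exp ((n:ℝ)*η) * Real.exp (-(n:ℝ)*R y) := by
      intro y hy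
      rw [← Real.exp_add]
      apply Real.exp_le_exp.2
      have hyK : y ∈ K := hJK hy
      have hdist : dist x y < δ := by
        rw [Real.dist_eq, abs_lt]
        constructor
        · have := hxJ.1; have := hy.2; nlinarith [hL₀δ]
        · have := hxJ.2; have := hy.1; nlinarith [hL₀δ]
      have hRd := hδ x hxK y hyK hdist
      rw [Real.dist_eq] at hRd
      have h2 : R y - R x ≤ η := by
        have := neg_abs_le (R x - R y)
        have := le_abs_self (R x - R y)
        have habs := abs_lt.1 hRd
        linarith [habs.1]
      nlinarith [Nat.cast_nonneg (α := ℝ) n]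
    have hJint : IntegrableOn (fun y : ℝ => ‖p.eval (y:ℂ)‖) (Set.Icc c (c+L₀)) :=
      (absPolyCont p).continuousOn.integrableOn_compact isCompact_Icc
    have hJwint : IntegrableOn w (Set.Icc c (c+L₀)) := hwint.mono_set hJK
    calc Real.exp (-(n:ℝ)*R x) * ‖p.eval (x:ℂ)‖
        ≤ Real.exp (-(n:ℝ)*R x) * ((200*((n:ℝ)+1)^2/L₀) *
            ∫ y in Set.Icc c (c+L₀), ‖p.eval (y:ℂ)‖) := by
          apply mul_le_mul_of_nonneg_left ?_ (Real.exp_pos _).le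
          have h2 := nik2 n p hp c (c+L₀) (by linarith) x hxJ
          simpa [add_sub_cancel_left] using h2
      _ = (200*((n:ℝ)+1)^2/L₀) *
            ∫ y in Set.Icc c (c+L₀), Real.exp (-(n:ℝ)*R x) * ‖p.eval (y:ℂ)‖ := by
          rw [MeasureTheory.integral_const_mul]
          ring
      _ ≤ (200*((n:ℝ)+1)^2/L₀) *
            ∫ y in Set.Icc c (c+L₀), Real.exp ((n:ℝ)*η) * w y := by
          apply mul_le_mul_of_nonneg_left ?_ (by positivity)
          refine setIntegral_mono_on ?_ ?_ measurableSet_Icc ?_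
          · exact hJint.const_mul _
          · exact hJwint.const_mul _
          · intro y hy
            rw [hwdef]
            have := hRxy y hy
            have habs := norm_nonneg (p.eval (y:ℂ))
            calc Real.exp (-(n:ℝ)*R x) * ‖p.eval (y:ℂ)‖
                ≤ (Real.exp ((n:ℝ)*η) * Real.exp (-(n:ℝ)*R y)) * ‖p.eval (y:ℂ)‖ :=
                  mul_le_mul_of_nonneg_right this habs
              _ = Real.exp ((n:ℝ)*η) * (Real.exp (-(n:ℝ)*R y) * ‖p.eval (y:ℂ)‖) := by
                  ring
      _ = (200*((n:ℝ)+1)^2/L₀) * Real.exp ((n:ℝ)*η) * ∫ y in Set.Icc c (c+L₀), w y := by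
          rw [MeasureTheory.integral_const_mul]
          ring
      _ ≤ (200*((n:ℝ)+1)^2/L₀) * Real.exp ((n:ℝ)*η) * ∫ y in K, w y := by
          apply mul_le_mul_of_nonneg_left ?_ (by positivity)
          refine setIntegral_mono_set hwint ?_ hJK.eventuallyLE
          exact Filter.Eventually.of_forall fun y => hwnn y
      _ ≤ (200*A/L₀ + 1) * (1+ε)^n * ∫ y in K, w y := by
          have hIK : 0 ≤ ∫ y in K, w y := setIntegral_nonneg hKm fun y _ => hwnn y
          have h1 : 200*((n:ℝ)+1)^2/L₀ * Real.exp ((n:ℝ)*η) ≤ (200*A/L₀+1)*(1+ε)^n := by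
            rw [hexp n]
            have h3 : r^n * r^n = (1+ε)^n := by rw [← mul_pow, hrsq]
            have hrn : (0:ℝ) < r^n := pow_pos (by linarith) n
            calc 200*((n:ℝ)+1)^2/L₀ * r^n ≤ 200*(A*r^n)/L₀ * r^n := by
                  gcongr
                  exact hA n
              _ = 200*A/L₀ * (r^n * r^n) := by ring
              _ = 200*A/L₀ * (1+ε)^n := by rw [h3]
              _ ≤ (200*A/L₀+1)*(1+ε)^n := by
                  have h4 : (0:ℝ) ≤ (1+ε)^n := by positivity
                  nlinarith
          exact mul_le_mul_of_nonneg_right h1 hIK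
end
end
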